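/- arXiv:2106.02534 — 2 statements merged into one kernel-verified Lean document; each statement's English description precedes it below -/
import Mathlib

section
/- For every integer n ≥ 4, the number of cyclic permutations of length n avoiding all three cyclic patterns [1243], [1324], and [1342] equals 3; that is, #Av_n([1243],[1324],[1342]) = 3. -/
/-- A sequence `σ` of length `n` (with distinct values) contains the pattern `π`
of length `k` if some subsequence of `σ` is order isomorphic to `π`. -/
def ContainsPat {n k : ℕ} (σ : Fin n → Fin n) (π : Fin k → ℕ) : Prop :=
  ∃ f : Fin k → Fin n, StrictMono f ∧ ∀ i j : Fin k, π i < π j ↔ σ (f i) < σ (f j)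

/-- The rotation of the sequence `σ` starting at position `r`. -/
def rotSeq {n : ℕ} (σ : Fin n → Fin n) (r : Fin n) : Fin n → Fin n :=
  fun i => σ (i + r)

/-- The cyclic permutation `[σ]` contains the cyclic pattern `[π]` if some
rotation of `σ` contains `π` linearly. -/
def CycContains {n k : ℕ} (σ : Fin n → Fin n) (π : Fin k → ℕ) : Prop :=
  ∃ r : Fin n, ContainsPat (rotSeq σ r) π

/-- The cyclic permutation `[σ]` avoids the cyclic pattern `[π]`. -/
def CycAvoids {n k : ℕ} (σ : Fin n → Fin n) (π : Fin k → ℕ) : Prop :=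
  ¬ CycContains σ π

/-- The cyclic permutation `[σ]`, i.e. the set of all rotations of `σ`. -/
def CycClass {n : ℕ} (σ : Fin n → Fin n) : Set (Fin n → Fin n) :=
  Set.range (rotSeq σ)

/-- The set of cyclic permutations (rotation classes) of length `n` all of whose
representatives are permutations and which satisfy the (rotation-invariant)
predicate `P`. -/
def AvClasses (n : ℕ) (P : (Fin n → Fin n) → Prop) : Set (Set (Fin n → Fin n)) :=
  { C | ∃ σ : Equiv.Perm (Fin n), C = CycClass ⇑σ ∧ P ⇑σ }

/-- The cyclic descent number: the number of indices `i` (mod `n`) with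
`σ i > σ (i+1)`. -/
def cdes {n : ℕ} (σ : Fin n → Fin n) : ℕ :=
  (Finset.univ.filter fun i : Fin n =>
    σ ⟨(↑i + 1) % n, Nat.mod_lt _ i.pos⟩ < σ i).card

/-- The cyclic peak number: the number of indices `i` (mod `n`) with
`σ (i-1) < σ i > σ (i+1)`. -/
def cpk {n : ℕ} (σ : Fin n → Fin n) : ℕ :=
  (Finset.univ.filter fun i : Fin n =>
    σ ⟨(↑i + (n - 1)) % n, Nat.mod_lt _ i.pos⟩ < σ i ∧
    σ ⟨(↑i + 1) % n, Nat.mod_lt _ i.pos⟩ < σ i).card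

section Helpers
variable {n : ℕ}

lemma vec4_zero {α : Type*} (a b c d : α) (h : (0:ℕ) < 4) : ![a,b,c,d] ⟨0,h⟩ = a := rfl
lemma vec4_one {α : Type*} (a b c d : α) (h : (1:ℕ) < 4) : ![a,b,c,d] ⟨1,h⟩ = b := rfl
lemma vec4_two {α : Type*} (a b c d : α) (h : (2:ℕ) < 4) : ![a,b,c,d] ⟨2,h⟩ = c := rfl
lemma vec4_three {α : Type*} (a b c d : α) (h : (3:ℕ) < 4) : ![a,b,c,d] ⟨3,h⟩ = d := rfl

lemma quad_mono (a b c d : Fin n) (hab : a < b) (hbc : b < c) (hcd : c < d) :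
    StrictMono ![a,b,c,d] := by
  intro x y hxy
  obtain ⟨xv, hx⟩ := x; obtain ⟨yv, hy⟩ := y
  rw [Fin.mk_lt_mk] at hxy
  rw [Fin.lt_def] at hab hbc hcd ⊢
  interval_cases xv <;> interval_cases yv <;>
    simp only [vec4_zero, vec4_one, vec4_two, vec4_three] <;> omega

lemma contains_1243 (g : Fin n → Fin n) (a b c d : Fin n)
    (hab : a < b) (hbc : b < c) (hcd : c < d)
    (v1 : (g a).val < (g b).val) (v2 : (g b).val < (g d).val) (v3 : (g d).val < (g c).val) :
    ContainsPat g ![1,2,4,3] := by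
  refine ⟨![a,b,c,d], quad_mono a b c d hab hbc hcd, ?_⟩
  intro i j
  obtain ⟨iv, hi⟩ := i; obtain ⟨jv, hj⟩ := j
  interval_cases iv <;> interval_cases jv <;>
    simp only [vec4_zero, vec4_one, vec4_two, vec4_three, Fin.lt_def] <;> omega

lemma contains_1324 (g : Fin n → Fin n) (a b c d : Fin n)
    (hab : a < b) (hbc : b < c) (hcd : c < d)
    (v1 : (g a).val < (g c).val) (v2 : (g c).val < (g b).val) (v3 : (g b).val < (g d).val) :
    ContainsPat g ![1,3,2,4] := by
  refine ⟨![a,b,c,d], quad_mono a b c d hab hbc hcd, ?_⟩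
  intro i j
  obtain ⟨iv, hi⟩ := i; obtain ⟨jv, hj⟩ := j
  interval_cases iv <;> interval_cases jv <;>
    simp only [vec4_zero, vec4_one, vec4_two, vec4_three, Fin.lt_def] <;> omega

lemma contains_1342 (g : Fin n → Fin n) (a b c d : Fin n)
    (hab : a < b) (hbc : b < c) (hcd : c < d)
    (v1 : (g a).val < (g d).val) (v2 : (g d).val < (g b).val) (v3 : (g b).val < (g c).val) :
    ContainsPat g ![1,3,4,2] := by
  refine ⟨![a,b,c,d], quad_mono a b c d hab hbc hcd, ?_⟩
  intro i j
  obtain ⟨iv, hi⟩ := i; obtain ⟨jv, hj⟩ := j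
  interval_cases iv <;> interval_cases jv <;>
    simp only [vec4_zero, vec4_one, vec4_two, vec4_three, Fin.lt_def] <;> omega

lemma extract_1243 (g : Fin n → Fin n) (h : ContainsPat g ![1,2,4,3]) :
    ∃ a b c d : Fin n, a < b ∧ b < c ∧ c < d ∧
      (g a).val < (g b).val ∧ (g b).val < (g d).val ∧ (g d).val < (g c).val := by
  obtain ⟨f, hf, hiff⟩ := h
  exact ⟨f 0, f 1, f 2, f 3, hf (by decide), hf (by decide), hf (by decide),
    Fin.lt_def.mp ((hiff 0 1).mp (by decide)),
    Fin.lt_def.mp ((hiff 1 3).mp (by decide)),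
    Fin.lt_def.mp ((hiff 3 2).mp (by decide))⟩

lemma extract_1324 (g : Fin n → Fin n) (h : ContainsPat g ![1,3,2,4]) :
    ∃ a b c d : Fin n, a < b ∧ b < c ∧ c < d ∧
      (g a).val < (g c).val ∧ (g c).val < (g b).val ∧ (g b).val < (g d).val := by
  obtain ⟨f, hf, hiff⟩ := h
  exact ⟨f 0, f 1, f 2, f 3, hf (by decide), hf (by decide), hf (by decide),
    Fin.lt_def.mp ((hiff 0 2).mp (by decide)),
    Fin.lt_def.mp ((hiff 2 1).mp (by decide)),
    Fin.lt_def.mp ((hiff 1 3).mp (by decide))⟩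

lemma extract_1342 (g : Fin n → Fin n) (h : ContainsPat g ![1,3,4,2]) :
    ∃ a b c d : Fin n, a < b ∧ b < c ∧ c < d ∧
      (g a).val < (g d).val ∧ (g d).val < (g b).val ∧ (g b).val < (g c).val := by
  obtain ⟨f, hf, hiff⟩ := h
  exact ⟨f 0, f 1, f 2, f 3, hf (by decide), hf (by decide), hf (by decide),
    Fin.lt_def.mp ((hiff 0 3).mp (by decide)),
    Fin.lt_def.mp ((hiff 3 1).mp (by decide)),
    Fin.lt_def.mp ((hiff 1 2).mp (by decide))⟩

lemma add_val_cases (hn0 : 0 < n) (x r : Fin n) :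
    ((x + r).val = x.val + r.val ∧ x.val + r.val < n) ∨
    ((x + r).val + n = x.val + r.val ∧ n ≤ x.val + r.val) := by
  have h := Fin.val_add x r
  have hx := x.isLt; have hr := r.isLt
  rcases Nat.lt_or_ge (x.val + r.val) n with hc | hc
  · left; rw [h, Nat.mod_eq_of_lt hc]; omega
  · right
    rw [h, Nat.mod_eq_sub_mod hc, Nat.mod_eq_of_lt (by omega)]
    omega

end Helpers

def sig3 (n : ℕ) [NeZero n] : Equiv.Perm (Fin n) := (Equiv.swap 0 1).trans (Equiv.subRight 1)

section CanonVal
variable {n : ℕ} [NeZero n]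

lemma sig3_val (hn : 4 ≤ n) (y : Fin n) :
    (y.val = 0 ∧ (sig3 n y).val = 0) ∨ (y.val = 1 ∧ (sig3 n y).val = n - 1) ∨
    (2 ≤ y.val ∧ (sig3 n y).val = y.val - 1) := by
  have h1v : (1 : Fin n).val = 1 := by rw [Fin.val_one', Nat.mod_eq_of_lt (by omega)]
  have h0v : (0 : Fin n).val = 0 := rfl
  by_cases hy0 : y = 0
  · left
    subst hy0
    constructor
    · rfl
    · show ((Equiv.subRight 1) ((Equiv.swap (0:Fin n) 1) 0)).val = 0
      rw [Equiv.swap_apply_left, Equiv.subRight_apply, sub_self]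
      exact h0v
  · by_cases hy1 : y = 1
    · right; left
      subst hy1
      refine ⟨h1v, ?_⟩
      show ((Equiv.subRight 1) ((Equiv.swap (0:Fin n) 1) 1)).val = n - 1
      rw [Equiv.swap_apply_right, Equiv.subRight_apply, Fin.sub_def]
      simp only [h0v, h1v]
      rw [Nat.mod_eq_of_lt (by omega)]
      omega
    · right; right
      have hyv : 2 ≤ y.val := by
        rcases Nat.lt_or_ge y.val 2 with h | h
        · exfalso
          interval_cases hv : y.val
          · exact hy0 (Fin.ext (by rw [hv, h0v]))
          · exact hy1 (Fin.ext (by rw [hv, h1v]))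
        · exact h
      refine ⟨hyv, ?_⟩
      show ((Equiv.subRight 1) ((Equiv.swap (0:Fin n) 1) y)).val = y.val - 1
      rw [Equiv.swap_apply_of_ne_of_ne hy0 hy1, Equiv.subRight_apply, Fin.sub_def]
      simp only [h1v]
      have hyn := y.isLt
      rw [Nat.mod_eq_sub_mod (by omega), Nat.mod_eq_of_lt (by omega)]
      omega

lemma sig3_rot_val (hn : 4 ≤ n) (r x : Fin n) :
    ((x.val + r.val = 0 ∨ x.val + r.val = n) ∧ (sig3 n (x + r)).val = 0) ∨
    ((x.val + r.val = 1 ∨ x.val + r.val = n + 1) ∧ (sig3 n (x + r)).val = n - 1) ∨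
    (2 ≤ x.val + r.val ∧ x.val + r.val < n ∧ (sig3 n (x + r)).val = x.val + r.val - 1) ∨
    (n + 2 ≤ x.val + r.val ∧ (sig3 n (x + r)).val = x.val + r.val - n - 1) := by
  have A := add_val_cases (n := n) (by omega) x r
  have B := sig3_val hn (x + r)
  have hx := x.isLt
  have hr := r.isLt
  rcases A with ⟨A1, A2⟩ | ⟨A1, A2⟩ <;> rcases B with ⟨B1, B2⟩ | ⟨B1, B2⟩ | ⟨B1, B2⟩ <;> omega

end CanonVal

section Avoid
variable {n : ℕ}

lemma id_avoids_1243 (hn : 4 ≤ n) : CycAvoids (⇑(Equiv.refl (Fin n))) ![1,2,4,3] := by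
  rintro ⟨r, hc⟩
  obtain ⟨a,b,c,d,hab,hbc,hcd,v1,v2,v3⟩ := extract_1243 _ hc
  simp only [show ∀ x : Fin n, rotSeq (⇑(Equiv.refl (Fin n))) r x = x + r from fun _ => rfl]
    at v1 v2 v3
  rw [Fin.lt_def] at hab hbc hcd
  have A := add_val_cases (n := n) (by omega) a r
  have B := add_val_cases (n := n) (by omega) b r
  have C := add_val_cases (n := n) (by omega) c r
  have D := add_val_cases (n := n) (by omega) d r
  have := a.isLt; have := b.isLt; have := c.isLt; have := d.isLt; have := r.isLt
  rcases A with ⟨A1,A2⟩|⟨A1,A2⟩ <;> rcases B with ⟨B1,B2⟩|⟨B1,B2⟩ <;>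
    rcases C with ⟨C1,C2⟩|⟨C1,C2⟩ <;> rcases D with ⟨D1,D2⟩|⟨D1,D2⟩ <;> omega

lemma id_avoids_1324 (hn : 4 ≤ n) : CycAvoids (⇑(Equiv.refl (Fin n))) ![1,3,2,4] := by
  rintro ⟨r, hc⟩
  obtain ⟨a,b,c,d,hab,hbc,hcd,v1,v2,v3⟩ := extract_1324 _ hc
  simp only [show ∀ x : Fin n, rotSeq (⇑(Equiv.refl (Fin n))) r x = x + r from fun _ => rfl]
    at v1 v2 v3
  rw [Fin.lt_def] at hab hbc hcd
  have A := add_val_cases (n := n) (by omega) a r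
  have B := add_val_cases (n := n) (by omega) b r
  have C := add_val_cases (n := n) (by omega) c r
  have D := add_val_cases (n := n) (by omega) d r
  have := a.isLt; have := b.isLt; have := c.isLt; have := d.isLt; have := r.isLt
  rcases A with ⟨A1,A2⟩|⟨A1,A2⟩ <;> rcases B with ⟨B1,B2⟩|⟨B1,B2⟩ <;>
    rcases C with ⟨C1,C2⟩|⟨C1,C2⟩ <;> rcases D with ⟨D1,D2⟩|⟨D1,D2⟩ <;> omega

lemma id_avoids_1342 (hn : 4 ≤ n) : CycAvoids (⇑(Equiv.refl (Fin n))) ![1,3,4,2] := by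
  rintro ⟨r, hc⟩
  obtain ⟨a,b,c,d,hab,hbc,hcd,v1,v2,v3⟩ := extract_1342 _ hc
  simp only [show ∀ x : Fin n, rotSeq (⇑(Equiv.refl (Fin n))) r x = x + r from fun _ => rfl]
    at v1 v2 v3
  rw [Fin.lt_def] at hab hbc hcd
  have A := add_val_cases (n := n) (by omega) a r
  have B := add_val_cases (n := n) (by omega) b r
  have C := add_val_cases (n := n) (by omega) c r
  have D := add_val_cases (n := n) (by omega) d r
  have := a.isLt; have := b.isLt; have := c.isLt; have := d.isLt; have := r.isLt
  rcases A with ⟨A1,A2⟩|⟨A1,A2⟩ <;> rcases B with ⟨B1,B2⟩|⟨B1,B2⟩ <;>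
    rcases C with ⟨C1,C2⟩|⟨C1,C2⟩ <;> rcases D with ⟨D1,D2⟩|⟨D1,D2⟩ <;> omega

lemma rev_avoids_1243 (hn : 4 ≤ n) : CycAvoids (⇑(Fin.revPerm : Equiv.Perm (Fin n))) ![1,2,4,3] := by
  rintro ⟨r, hc⟩
  obtain ⟨a,b,c,d,hab,hbc,hcd,v1,v2,v3⟩ := extract_1243 _ hc
  simp only [show ∀ x : Fin n, rotSeq (⇑(Fin.revPerm : Equiv.Perm (Fin n))) r x = (x + r).rev
      from fun _ => rfl, Fin.val_rev] at v1 v2 v3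
  rw [Fin.lt_def] at hab hbc hcd
  have A := add_val_cases (n := n) (by omega) a r
  have B := add_val_cases (n := n) (by omega) b r
  have C := add_val_cases (n := n) (by omega) c r
  have D := add_val_cases (n := n) (by omega) d r
  have := a.isLt; have := b.isLt; have := c.isLt; have := d.isLt; have := r.isLt
  rcases A with ⟨A1,A2⟩|⟨A1,A2⟩ <;> rcases B with ⟨B1,B2⟩|⟨B1,B2⟩ <;>
    rcases C with ⟨C1,C2⟩|⟨C1,C2⟩ <;> rcases D with ⟨D1,D2⟩|⟨D1,D2⟩ <;> omega

lemma rev_avoids_1324 (hn : 4 ≤ n) : CycAvoids (⇑(Fin.revPerm : Equiv.Perm (Fin n))) ![1,3,2,4] := by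
  rintro ⟨r, hc⟩
  obtain ⟨a,b,c,d,hab,hbc,hcd,v1,v2,v3⟩ := extract_1324 _ hc
  simp only [show ∀ x : Fin n, rotSeq (⇑(Fin.revPerm : Equiv.Perm (Fin n))) r x = (x + r).rev
      from fun _ => rfl, Fin.val_rev] at v1 v2 v3
  rw [Fin.lt_def] at hab hbc hcd
  have A := add_val_cases (n := n) (by omega) a r
  have B := add_val_cases (n := n) (by omega) b r
  have C := add_val_cases (n := n) (by omega) c r
  have D := add_val_cases (n := n) (by omega) d r
  have := a.isLt; have := b.isLt; have := c.isLt; have := d.isLt; have := r.isLt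
  rcases A with ⟨A1,A2⟩|⟨A1,A2⟩ <;> rcases B with ⟨B1,B2⟩|⟨B1,B2⟩ <;>
    rcases C with ⟨C1,C2⟩|⟨C1,C2⟩ <;> rcases D with ⟨D1,D2⟩|⟨D1,D2⟩ <;> omega

lemma rev_avoids_1342 (hn : 4 ≤ n) : CycAvoids (⇑(Fin.revPerm : Equiv.Perm (Fin n))) ![1,3,4,2] := by
  rintro ⟨r, hc⟩
  obtain ⟨a,b,c,d,hab,hbc,hcd,v1,v2,v3⟩ := extract_1342 _ hc
  simp only [show ∀ x : Fin n, rotSeq (⇑(Fin.revPerm : Equiv.Perm (Fin n))) r x = (x + r).rev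
      from fun _ => rfl, Fin.val_rev] at v1 v2 v3
  rw [Fin.lt_def] at hab hbc hcd
  have A := add_val_cases (n := n) (by omega) a r
  have B := add_val_cases (n := n) (by omega) b r
  have C := add_val_cases (n := n) (by omega) c r
  have D := add_val_cases (n := n) (by omega) d r
  have := a.isLt; have := b.isLt; have := c.isLt; have := d.isLt; have := r.isLt
  rcases A with ⟨A1,A2⟩|⟨A1,A2⟩ <;> rcases B with ⟨B1,B2⟩|⟨B1,B2⟩ <;>
    rcases C with ⟨C1,C2⟩|⟨C1,C2⟩ <;> rcases D with ⟨D1,D2⟩|⟨D1,D2⟩ <;> omega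

lemma sig3_avoids_1243 [NeZero n] (hn : 4 ≤ n) : CycAvoids (⇑(sig3 n)) ![1,2,4,3] := by
  rintro ⟨r, hc⟩
  obtain ⟨a,b,c,d,hab,hbc,hcd,v1,v2,v3⟩ := extract_1243 _ hc
  simp only [show ∀ x : Fin n, rotSeq (⇑(sig3 n)) r x = (sig3 n) (x + r)
      from fun _ => rfl] at v1 v2 v3
  rw [Fin.lt_def] at hab hbc hcd
  have A := sig3_rot_val hn r a
  have B := sig3_rot_val hn r b
  have C := sig3_rot_val hn r c
  have D := sig3_rot_val hn r d
  have := a.isLt; have := b.isLt; have := c.isLt; have := d.isLt; have := r.isLt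
  rcases A with ⟨A1,A2⟩|⟨A1,A2⟩|⟨A1,A2,A3⟩|⟨A1,A2⟩ <;>
    rcases B with ⟨B1,B2⟩|⟨B1,B2⟩|⟨B1,B2,B3⟩|⟨B1,B2⟩ <;>
    rcases C with ⟨C1,C2⟩|⟨C1,C2⟩|⟨C1,C2,C3⟩|⟨C1,C2⟩ <;>
    rcases D with ⟨D1,D2⟩|⟨D1,D2⟩|⟨D1,D2,D3⟩|⟨D1,D2⟩ <;> omega

lemma sig3_avoids_1324 [NeZero n] (hn : 4 ≤ n) : CycAvoids (⇑(sig3 n)) ![1,3,2,4] := by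
  rintro ⟨r, hc⟩
  obtain ⟨a,b,c,d,hab,hbc,hcd,v1,v2,v3⟩ := extract_1324 _ hc
  simp only [show ∀ x : Fin n, rotSeq (⇑(sig3 n)) r x = (sig3 n) (x + r)
      from fun _ => rfl] at v1 v2 v3
  rw [Fin.lt_def] at hab hbc hcd
  have A := sig3_rot_val hn r a
  have B := sig3_rot_val hn r b
  have C := sig3_rot_val hn r c
  have D := sig3_rot_val hn r d
  have := a.isLt; have := b.isLt; have := c.isLt; have := d.isLt; have := r.isLt
  rcases A with ⟨A1,A2⟩|⟨A1,A2⟩|⟨A1,A2,A3⟩|⟨A1,A2⟩ <;>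
    rcases B with ⟨B1,B2⟩|⟨B1,B2⟩|⟨B1,B2,B3⟩|⟨B1,B2⟩ <;>
    rcases C with ⟨C1,C2⟩|⟨C1,C2⟩|⟨C1,C2,C3⟩|⟨C1,C2⟩ <;>
    rcases D with ⟨D1,D2⟩|⟨D1,D2⟩|⟨D1,D2,D3⟩|⟨D1,D2⟩ <;> omega

lemma sig3_avoids_1342 [NeZero n] (hn : 4 ≤ n) : CycAvoids (⇑(sig3 n)) ![1,3,4,2] := by
  rintro ⟨r, hc⟩
  obtain ⟨a,b,c,d,hab,hbc,hcd,v1,v2,v3⟩ := extract_1342 _ hc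
  simp only [show ∀ x : Fin n, rotSeq (⇑(sig3 n)) r x = (sig3 n) (x + r)
      from fun _ => rfl] at v1 v2 v3
  rw [Fin.lt_def] at hab hbc hcd
  have A := sig3_rot_val hn r a
  have B := sig3_rot_val hn r b
  have C := sig3_rot_val hn r c
  have D := sig3_rot_val hn r d
  have := a.isLt; have := b.isLt; have := c.isLt; have := d.isLt; have := r.isLt
  rcases A with ⟨A1,A2⟩|⟨A1,A2⟩|⟨A1,A2,A3⟩|⟨A1,A2⟩ <;>
    rcases B with ⟨B1,B2⟩|⟨B1,B2⟩|⟨B1,B2,B3⟩|⟨B1,B2⟩ <;>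
    rcases C with ⟨C1,C2⟩|⟨C1,C2⟩|⟨C1,C2,C3⟩|⟨C1,C2⟩ <;>
    rcases D with ⟨D1,D2⟩|⟨D1,D2⟩|⟨D1,D2,D3⟩|⟨D1,D2⟩ <;> omega

end Avoid

section Rot
variable {n : ℕ} [NeZero n]

lemma rot_zero (σ : Fin n → Fin n) : rotSeq σ 0 = σ :=
  funext fun i => congrArg σ (add_zero i)

lemma rot_rot (σ : Fin n → Fin n) (r s : Fin n) :
    rotSeq (rotSeq σ r) s = rotSeq σ (s + r) :=
  funext fun i => congrArg σ (add_assoc i s r)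

lemma cycClass_rot (σ : Fin n → Fin n) (r : Fin n) :
    CycClass (rotSeq σ r) = CycClass σ := by
  ext g
  constructor
  · rintro ⟨s, rfl⟩
    exact ⟨s + r, (rot_rot σ r s).symm⟩
  · rintro ⟨t, rfl⟩
    exact ⟨t - r, by rw [rot_rot, sub_add_cancel]⟩

lemma val_one_of (hn : 4 ≤ n) : ((1 : Fin n)).val = 1 := by
  rw [Fin.val_one', Nat.mod_eq_of_lt (by omega)]

lemma ne_12 (hn : 4 ≤ n) :
    CycClass (⇑(Equiv.refl (Fin n))) ≠ CycClass (⇑(Fin.revPerm : Equiv.Perm (Fin n))) := by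
  intro h
  have hm : ⇑(Equiv.refl (Fin n)) ∈ CycClass (⇑(Fin.revPerm : Equiv.Perm (Fin n))) := by
    rw [← h]; exact ⟨0, rot_zero _⟩
  obtain ⟨r, hr⟩ := hm
  have e0 := congrArg Fin.val (congrFun hr 0)
  have e1 := congrArg Fin.val (congrFun hr 1)
  rw [show rotSeq (⇑(Fin.revPerm : Equiv.Perm (Fin n))) r 0 = (0 + r).rev from rfl,
    Fin.val_rev, show ((Equiv.refl (Fin n)) 0).val = 0 from rfl] at e0
  rw [show rotSeq (⇑(Fin.revPerm : Equiv.Perm (Fin n))) r 1 = (1 + r).rev from rfl,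
    Fin.val_rev, show ((Equiv.refl (Fin n)) 1).val = (1 : Fin n).val from rfl,
    val_one_of hn] at e1
  have A0 := add_val_cases (n := n) (by omega) 0 r
  have A1 := add_val_cases (n := n) (by omega) 1 r
  rw [show ((0 : Fin n)).val = 0 from rfl] at A0
  rw [val_one_of hn] at A1
  have := r.isLt
  omega

lemma ne_13 (hn : 4 ≤ n) :
    CycClass (⇑(Equiv.refl (Fin n))) ≠ CycClass (⇑(sig3 n)) := by
  intro h
  have hm : ⇑(Equiv.refl (Fin n)) ∈ CycClass (⇑(sig3 n)) := by
    rw [← h]; exact ⟨0, rot_zero _⟩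
  obtain ⟨r, hr⟩ := hm
  have e0 := congrArg Fin.val (congrFun hr 0)
  have e1 := congrArg Fin.val (congrFun hr 1)
  rw [show rotSeq (⇑(sig3 n)) r 0 = (sig3 n) (0 + r) from rfl,
    show ((Equiv.refl (Fin n)) 0).val = 0 from rfl] at e0
  rw [show rotSeq (⇑(sig3 n)) r 1 = (sig3 n) (1 + r) from rfl,
    show ((Equiv.refl (Fin n)) 1).val = (1 : Fin n).val from rfl, val_one_of hn] at e1
  have A0 := sig3_rot_val hn r 0
  have A1 := sig3_rot_val hn r 1
  rw [show ((0 : Fin n)).val = 0 from rfl] at A0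
  rw [val_one_of hn] at A1
  have := r.isLt
  rcases A0 with ⟨A1',A2'⟩|⟨A1',A2'⟩|⟨A1',A2',A3'⟩|⟨A1',A2'⟩ <;>
    rcases A1 with ⟨B1,B2⟩|⟨B1,B2⟩|⟨B1,B2,B3⟩|⟨B1,B2⟩ <;> omega

lemma ne_23 (hn : 4 ≤ n) :
    CycClass (⇑(Fin.revPerm : Equiv.Perm (Fin n))) ≠ CycClass (⇑(sig3 n)) := by
  intro h
  have hm : ⇑(Fin.revPerm : Equiv.Perm (Fin n)) ∈ CycClass (⇑(sig3 n)) := by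
    rw [← h]; exact ⟨0, rot_zero _⟩
  obtain ⟨r, hr⟩ := hm
  have e0 := congrArg Fin.val (congrFun hr 0)
  have e1 := congrArg Fin.val (congrFun hr 1)
  rw [show rotSeq (⇑(sig3 n)) r 0 = (sig3 n) (0 + r) from rfl,
    show ((Fin.revPerm : Equiv.Perm (Fin n)) 0).val = (0 : Fin n).rev.val from rfl,
    Fin.val_rev, show ((0 : Fin n)).val = 0 from rfl] at e0
  rw [show rotSeq (⇑(sig3 n)) r 1 = (sig3 n) (1 + r) from rfl,
    show ((Fin.revPerm : Equiv.Perm (Fin n)) 1).val = (1 : Fin n).rev.val from rfl,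
    Fin.val_rev, val_one_of hn] at e1
  have A0 := sig3_rot_val hn r 0
  have A1 := sig3_rot_val hn r 1
  rw [show ((0 : Fin n)).val = 0 from rfl] at A0
  rw [val_one_of hn] at A1
  have := r.isLt
  rcases A0 with ⟨A1',A2'⟩|⟨A1',A2'⟩|⟨A1',A2',A3'⟩|⟨A1',A2'⟩ <;>
    rcases A1 with ⟨B1,B2⟩|⟨B1,B2⟩|⟨B1,B2,B3⟩|⟨B1,B2⟩ <;> omega

end Rot

lemma step_sum {v : ℕ → ℕ} {a b : ℕ} (h : ∀ t, a ≤ t → t < b → v t < v (t+1)) :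
    ∀ s t, a ≤ s → s ≤ t → t ≤ b → v s + (t - s) ≤ v t := by
  intro s t hs hst htb
  induction t with
  | zero =>
    have hs0 : s = 0 := by omega
    subst hs0; simp
  | succ u ih =>
    rcases Nat.lt_or_ge s (u+1) with hc | hc
    · have h1 := ih (by omega) (by omega)
      have h2 := h u (by omega) (by omega)
      omega
    · have hse : s = u + 1 := by omega
      subst hse; simp

lemma core_nat (n : ℕ) (hn : 4 ≤ n) (v : ℕ → ℕ)
    (hlt : ∀ t, t < n → v t < n)
    (hinj : ∀ s t, s < n → t < n → v s = v t → s = t)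
    (hsurj : ∀ y, y < n → ∃ t, t < n ∧ v t = y)
    (h0 : v 0 = 0)
    (H132 : ∀ i j k, 0 < i → i < j → j < k → k < n → v i < v k → v k < v j → False)
    (H213 : ∀ i j k, 0 < i → i < j → j < k → k < n → v j < v i → v i < v k → False)
    (H231 : ∀ i j k, 0 < i → i < j → j < k → k < n → v k < v i → v i < v j → False)
    (H4312 : ∀ i j k l, 0 < i → i < j → j < k → k < l → l < n →
      v k < v l → v l < v j → v j < v i → False) :
    (∀ t, t < n → v t = t) ∨
    (∀ t, 0 < t → t < n → v t = n - t) ∨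
    (v 1 = n - 1 ∧ ∀ t, 2 ≤ t → t < n → v t = t - 1) := by
  obtain ⟨p, hpn, hvp⟩ := hsurj (n-1) (by omega)
  have hp0 : 0 < p := by
    rcases Nat.eq_zero_or_pos p with h | h
    · subst h; omega
    · exact h
  have hpos : ∀ t, 0 < t → t < n → 0 < v t := by
    intro t ht htn
    rcases Nat.eq_zero_or_pos (v t) with h | h
    · have := hinj t 0 htn (by omega) (by omega)
      omega
    · exact h
  have hpcases : p = 1 ∨ p = n - 1 := by
    by_contra hcon
    push_neg at hcon
    have h1p : 1 < p := by omega
    have hpn1 : p < n - 1 := by omega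
    have hne : v 1 ≠ v (n-1) := fun h => by
      have := hinj 1 (n-1) (by omega) (by omega) h; omega
    rcases lt_or_gt_of_ne hne with hlt1 | hgt1
    · -- v 1 < v (n-1) < v p : pattern 132 at (1, p, n-1)
      have hvn1 : v (n-1) < v p := by
        have h1 : v (n-1) ≠ n - 1 := fun h => by
          have := hinj (n-1) p (by omega) hpn (by omega); omega
        have := hlt (n-1) (by omega); omega
      exact H132 1 p (n-1) (by omega) h1p hpn1 (by omega) hlt1 hvn1
    · have hvn1 : v 1 < v p := by
        have h1 : v 1 ≠ n - 1 := fun h => by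
          have := hinj 1 p (by omega) hpn (by omega); omega
        have := hlt 1 (by omega); omega
      exact H231 1 p (n-1) (by omega) h1p hpn1 (by omega) hgt1 hvn1
  rcases hpcases with hp1 | hplast
  case inr =>
    -- max at last position: increasing, v = id
    subst hplast
    have inc : ∀ s t, 0 < s → s < t → t < n → v s < v t := by
      intro s t hs hst htn
      rcases Nat.lt_or_ge t (n-1) with hc | hc
      · by_contra hcon
        push_neg at hcon
        have hne : v t ≠ v s := fun h => by
          have := hinj t s htn (by omega) h; omega
        have hts : v t < v s := by omega
        have hslt : v s < v (n-1) := by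
          have h1 : v s ≠ n - 1 := fun h => by
            have := hinj s (n-1) (by omega) (by omega) (by omega); omega
          have := hlt s (by omega); omega
        exact H213 s t (n-1) hs hst hc (by omega) hts hslt
      · have ht : t = n - 1 := by omega
        have hvt : v t = n - 1 := by rw [ht]; exact hvp
        have h1 : v s ≠ n - 1 := fun h => by
          have := hinj s (n-1) (by omega) (by omega) (by omega); omega
        have := hlt s (by omega); omega
    left
    intro t htn
    rcases Nat.eq_zero_or_pos t with h | h
    · subst h; omega
    · have hstep : ∀ u, 1 ≤ u → u < n - 1 → v u < v (u+1) := by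
        intro u hu hun; exact inc u (u+1) (by omega) (by omega) (by omega)
      have lower := step_sum hstep 1 t (by omega) (by omega) (by omega)
      have upper := step_sum hstep t (n-1) (by omega) (by omega) (by omega)
      have hv1 := hpos 1 (by omega) (by omega)
      omega
  case inl =>
    subst hp1
    -- v 1 = n - 1 : max at position 1
    have H312 : ∀ i j k, 1 < i → i < j → j < k → k < n → v j < v k → v k < v i → False := by
      intro i j k hi hij hjk hkn hjk' hki
      have hvi : v i < v 1 := by
        have h1 : v i ≠ n - 1 := fun h => by
          have := hinj i 1 (by omega) (by omega) (by omega); omega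
        have := hlt i (by omega); omega
      exact H4312 1 i j k (by omega) hi hij hjk hkn hjk' hki hvi
    have trip : ∀ i j k, 2 ≤ i → i < j → j < k → k < n →
        (v i < v j ∧ v j < v k) ∨ (v k < v j ∧ v j < v i) := by
      intro i j k h2 hij hjk hkn
      have hne1 : v i ≠ v j := fun h => by have := hinj i j (by omega) (by omega) h; omega
      have hne2 : v j ≠ v k := fun h => by have := hinj j k (by omega) (by omega) h; omega
      have hne3 : v i ≠ v k := fun h => by have := hinj i k (by omega) (by omega) h; omega
      rcases lt_or_gt_of_ne hne1 with a | a <;> rcases lt_or_gt_of_ne hne2 with b | b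
      · exact Or.inl ⟨a, b⟩
      · rcases lt_or_gt_of_ne hne3 with c | c
        · exact absurd (H132 i j k (by omega) hij hjk hkn c b) (by simp)
        · exact absurd (H231 i j k (by omega) hij hjk hkn c a) (by simp)
      · rcases lt_or_gt_of_ne hne3 with c | c
        · exact absurd (H213 i j k (by omega) hij hjk hkn a c) (by simp)
        · exact absurd (H312 i j k (by omega) hij hjk hkn b c) (by simp)
      · exact Or.inr ⟨b, a⟩
    have hne23 : v 2 ≠ v 3 := fun h => by have := hinj 2 3 (by omega) (by omega) h; omega
    rcases lt_or_gt_of_ne hne23 with hup | hdn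
    · -- increasing from position 2 on: third class
      have key : ∀ t, 3 < t → t < n → v 3 < v t := by
        intro t ht htn
        rcases trip 2 3 t (by omega) (by omega) (by omega) htn with ⟨_, y⟩ | ⟨_, y⟩
        · exact y
        · omega
      have inc2 : ∀ s t, 2 ≤ s → s < t → t < n → v s < v t := by
        intro s t hs hst htn
        rcases Nat.lt_or_ge s 4 with hs4 | hs4
        · rcases Nat.lt_or_ge t 4 with ht4 | ht4
          · have : s = 2 ∧ t = 3 := by omega
            obtain ⟨rfl, rfl⟩ := this; exact hup
          · rcases Nat.lt_or_ge s 3 with hs3 | hs3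
            · have : s = 2 := by omega
              subst this
              exact lt_trans hup (key t (by omega) htn)
            · have : s = 3 := by omega
              subst this
              exact key t (by omega) htn
        · have h3s := key s (by omega) (by omega)
          rcases trip 3 s t (by omega) (by omega) hst htn with ⟨_, y⟩ | ⟨_, y⟩
          · exact y
          · omega
      right; right
      refine ⟨hvp, ?_⟩
      intro t h2t htn
      have hstep : ∀ u, 2 ≤ u → u < n - 1 → v u < v (u+1) := by
        intro u hu hun; exact inc2 u (u+1) hu (by omega) (by omega)
      have lower := step_sum hstep 2 t (by omega) (by omega) (by omega)
      have upper := step_sum hstep t (n-1) (by omega) (by omega) (by omega)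
      have hv2 := hpos 2 (by omega) (by omega)
      -- v (n-1) ≤ n - 2 : since v (n-1) ≠ n-1 (taken by position 1) unless n-1 = 1
      have hvn1 : v (n-1) ≠ n - 1 := fun h => by
        have := hinj (n-1) 1 (by omega) (by omega) (by omega); omega
      have hvtn : v (n-1) < n := hlt (n-1) (by omega)
      omega
    · -- decreasing: second class
      have key : ∀ t, 3 < t → t < n → v t < v 3 := by
        intro t ht htn
        rcases trip 2 3 t (by omega) (by omega) (by omega) htn with ⟨y1, y2⟩ | ⟨y1, y2⟩
        · omega
        · exact y1
      have dec2 : ∀ s t, 2 ≤ s → s < t → t < n → v t < v s := by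
        intro s t hs hst htn
        rcases Nat.lt_or_ge s 4 with hs4 | hs4
        · rcases Nat.lt_or_ge t 4 with ht4 | ht4
          · have : s = 2 ∧ t = 3 := by omega
            obtain ⟨rfl, rfl⟩ := this; exact hdn
          · rcases Nat.lt_or_ge s 3 with hs3 | hs3
            · have : s = 2 := by omega
              subst this
              exact lt_trans (key t (by omega) htn) hdn
            · have : s = 3 := by omega
              subst this
              exact key t (by omega) htn
        · have h3s := key s (by omega) (by omega)
          rcases trip 3 s t (by omega) (by omega) hst htn with ⟨y1, y2⟩ | ⟨y1, y2⟩
          · omega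
          · exact y1
      have dec1 : ∀ s t, 1 ≤ s → s < t → t < n → v t < v s := by
        intro s t hs hst htn
        rcases Nat.lt_or_ge s 2 with hs2 | hs2
        · have : s = 1 := by omega
          subst this
          have h1 : v t ≠ n - 1 := fun h => by
            have := hinj t 1 htn (by omega) (by omega); omega
          have := hlt t htn; omega
        · exact dec2 s t hs2 hst htn
      right; left
      intro t ht htn
      -- use reversed function
      have hstep : ∀ u, 0 ≤ u → u < n - 2 → v (n-1-u) < v (n-1-(u+1)) := by
        intro u _ hun
        exact dec1 (n-1-(u+1)) (n-1-u) (by omega) (by omega) (by omega)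
      have hstep' : ∀ u, 0 ≤ u → u < n - 2 → (fun w => v (n-1-w)) u < (fun w => v (n-1-w)) (u+1) := hstep
      have lower := step_sum hstep' 0 (n-1-t) (by omega) (by omega) (by omega)
      have upper := step_sum hstep' (n-1-t) (n-2) (by omega) (by omega) (by omega)
      have e1 : n - 1 - (n-1-t) = t := by omega
      rw [e1] at lower upper
      have e2 : n - 1 - (n - 2) = 1 := by omega
      rw [e2] at upper
      have hv0 := hpos (n-1) (by omega) (by omega)
      have e3 : n - 1 - 0 = n - 1 := by omega
      rw [e3] at lower
      omega

lemma tau_classify {n : ℕ} [NeZero n] (hn : 4 ≤ n) (τ : Fin n → Fin n)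
    (hbij : Function.Bijective τ) (τ0 : τ 0 = 0)
    (hA1 : CycAvoids τ ![1,2,4,3]) (hA2 : CycAvoids τ ![1,3,2,4])
    (hA3 : CycAvoids τ ![1,3,4,2]) :
    (∀ i : Fin n, (τ i).val = i.val) ∨
    (∀ i : Fin n, 0 < i.val → (τ i).val = n - i.val) ∨
    (((τ ⟨1, by omega⟩).val = n - 1) ∧ ∀ i : Fin n, 2 ≤ i.val → (τ i).val = i.val - 1) := by
  have hzv : ((0 : Fin n)).val = 0 := rfl
  obtain ⟨v, hvt⟩ : ∃ v : ℕ → ℕ, ∀ t (h : t < n), v t = (τ ⟨t, h⟩).val :=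
    ⟨fun t => if h : t < n then (τ ⟨t, h⟩).val else 0, fun t h => dif_pos h⟩
  have hvt' : ∀ i : Fin n, v i.val = (τ i).val := fun i =>
    (hvt i.val i.isLt).trans (congrArg (fun z => (τ z).val) (Fin.eta i i.isLt))
  have t0 : ∀ h : (0:ℕ) < n, (τ ⟨0, h⟩).val = 0 := fun h => by
    rw [show (⟨0, h⟩ : Fin n) = 0 from Fin.ext rfl, τ0]
    exact hzv
  have hposτ : ∀ t (ht : 0 < t) (hn' : t < n), 0 < (τ ⟨t, hn'⟩).val := by
    intro t ht hn'
    rcases Nat.eq_zero_or_pos (τ ⟨t, hn'⟩).val with h | h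
    · exfalso
      have h1 : τ ⟨t, hn'⟩ = τ 0 := by rw [τ0]; exact Fin.ext (h.trans hzv.symm)
      have h2 := hbij.1 h1
      have h3 : t = 0 := (congrArg Fin.val h2).trans hzv
      omega
    · exact h
  have E : ∀ r : Fin n, ∀ x : Fin n, rotSeq τ r x = τ (x + r) := fun _ _ => rfl
  have H132 : ∀ i j k, 0 < i → i < j → j < k → k < n → v i < v k → v k < v j → False := by
    intro i j k hi hij hjk hkn h1 h2
    have hin : i < n := by omega
    have hjn : j < n := by omega
    rw [hvt i hin, hvt k hkn] at h1
    rw [hvt k hkn, hvt j hjn] at h2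
    apply hA1 ⟨0, ?_⟩
    rw [rot_zero]
    exact contains_1243 τ ⟨0, by omega⟩ ⟨i, by omega⟩ ⟨j, by omega⟩ ⟨k, by omega⟩
      (Fin.mk_lt_mk.mpr hi) (Fin.mk_lt_mk.mpr hij) (Fin.mk_lt_mk.mpr hjk)
      (by rw [t0]; exact hposτ i hi (by omega)) h1 h2
  have H213 : ∀ i j k, 0 < i → i < j → j < k → k < n → v j < v i → v i < v k → False := by
    intro i j k hi hij hjk hkn h1 h2
    have hin : i < n := by omega
    have hjn : j < n := by omega
    rw [hvt j hjn, hvt i hin] at h1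
    rw [hvt i hin, hvt k hkn] at h2
    apply hA2 ⟨0, ?_⟩
    rw [rot_zero]
    exact contains_1324 τ ⟨0, by omega⟩ ⟨i, by omega⟩ ⟨j, by omega⟩ ⟨k, by omega⟩
      (Fin.mk_lt_mk.mpr hi) (Fin.mk_lt_mk.mpr hij) (Fin.mk_lt_mk.mpr hjk)
      (by rw [t0]; exact hposτ j (by omega) (by omega)) h1 h2
  have H231 : ∀ i j k, 0 < i → i < j → j < k → k < n → v k < v i → v i < v j → False := by
    intro i j k hi hij hjk hkn h1 h2
    have hin : i < n := by omega
    have hjn : j < n := by omega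
    rw [hvt k hkn, hvt i hin] at h1
    rw [hvt i hin, hvt j hjn] at h2
    apply hA3 ⟨0, ?_⟩
    rw [rot_zero]
    exact contains_1342 τ ⟨0, by omega⟩ ⟨i, by omega⟩ ⟨j, by omega⟩ ⟨k, by omega⟩
      (Fin.mk_lt_mk.mpr hi) (Fin.mk_lt_mk.mpr hij) (Fin.mk_lt_mk.mpr hjk)
      (by rw [t0]; exact hposτ k (by omega) (by omega)) h1 h2
  have H4312 : ∀ i j k l, 0 < i → i < j → j < k → k < l → l < n →
      v k < v l → v l < v j → v j < v i → False := by
    intro i j k l hi hij hjk hkl hln h1 h2 h3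
    have hin : i < n := by omega
    have hjn : j < n := by omega
    have hkn : k < n := by omega
    rw [hvt k hkn, hvt l hln] at h1
    rw [hvt l hln, hvt j hjn] at h2
    rw [hvt j hjn, hvt i hin] at h3
    have hn0 : (0:ℕ) < n := by omega
    have hb1 : l - k < n := by omega
    have hb2 : i + n - k < n := by omega
    have hb3 : j + n - k < n := by omega
    have q1 : l - k + k = l := by omega
    have q2 : i + n - k + k = i + n := by omega
    have q3 : j + n - k + k = j + n := by omega
    have hkl2 : l < n := by omega
    have hltk : k < n := hkn
    have m0 : (0 + k) % n = k := by rw [Nat.zero_add]; exact Nat.mod_eq_of_lt hkn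
    have m1 : (l - k + k) % n = l := by rw [q1]; exact Nat.mod_eq_of_lt hln
    have m2 : (i + n - k + k) % n = i := by
      rw [q2, Nat.add_mod_right]; exact Nat.mod_eq_of_lt hin
    have m3 : (j + n - k + k) % n = j := by
      rw [q3, Nat.add_mod_right]; exact Nat.mod_eq_of_lt hjn
    have ea : (⟨0, hn0⟩ : Fin n) + ⟨k, hkn⟩ = ⟨k, hkn⟩ := by
      apply Fin.ext
      rw [Fin.val_add]
      exact m0
    have eb : (⟨l - k, hb1⟩ : Fin n) + ⟨k, hkn⟩ = ⟨l, hln⟩ := by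
      apply Fin.ext
      rw [Fin.val_add]
      exact m1
    have ec : (⟨i + n - k, hb2⟩ : Fin n) + ⟨k, hkn⟩ = ⟨i, hin⟩ := by
      apply Fin.ext
      rw [Fin.val_add]
      exact m2
    have ed : (⟨j + n - k, hb3⟩ : Fin n) + ⟨k, hkn⟩ = ⟨j, hjn⟩ := by
      apply Fin.ext
      rw [Fin.val_add]
      exact m3
    apply hA1 ⟨⟨k, hkn⟩, ?_⟩
    have p1 : (⟨0, hn0⟩ : Fin n) < ⟨l - k, hb1⟩ := Fin.mk_lt_mk.mpr (by omega)
    have p2 : (⟨l - k, hb1⟩ : Fin n) < ⟨i + n - k, hb2⟩ := Fin.mk_lt_mk.mpr (by omega)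
    have p3 : (⟨i + n - k, hb2⟩ : Fin n) < ⟨j + n - k, hb3⟩ := Fin.mk_lt_mk.mpr (by omega)
    refine contains_1243 (rotSeq τ ⟨k, hkn⟩) ⟨0, hn0⟩ ⟨l - k, hb1⟩
      ⟨i + n - k, hb2⟩ ⟨j + n - k, hb3⟩ p1 p2 p3 ?_ ?_ ?_
    · rw [E, E, ea, eb]; exact h1
    · rw [E, E, eb, ed]; exact h2
    · rw [E, E, ed, ec]; exact h3
  have hlt : ∀ t, t < n → v t < n := by
    intro t h
    rw [hvt t h]
    exact (τ ⟨t, h⟩).isLt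
  have hinjv : ∀ s t, s < n → t < n → v s = v t → s = t := by
    intro s t hs ht he
    rw [hvt s hs, hvt t ht] at he
    exact congrArg Fin.val (hbij.1 (Fin.ext he))
  have hsurjv : ∀ y, y < n → ∃ t, t < n ∧ v t = y := by
    intro y hy
    obtain ⟨x, hx⟩ := hbij.2 ⟨y, hy⟩
    refine ⟨x.val, x.isLt, ?_⟩
    rw [hvt' x, hx]
  have hz : (0:ℕ) < n := by omega
  have h0' : v 0 = 0 := by rw [hvt 0 hz]; exact t0 hz
  have main := core_nat n hn v hlt hinjv hsurjv h0' H132 H213 H231 H4312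
  rcases main with hc1 | hc2 | ⟨hc31, hc32⟩
  · left
    intro i
    rw [← hvt' i]
    exact hc1 i.val i.isLt
  · right; left
    intro i hi
    rw [← hvt' i]
    exact hc2 i.val hi i.isLt
  · right; right
    constructor
    · have ho : (1:ℕ) < n := by omega
      rw [← hvt 1 ho]
      exact hc31
    · intro i hi
      rw [← hvt' i]
      exact hc32 i.val hi i.isLt

theorem card_av_1243_1324_1342 (n : ℕ) (hn : 4 ≤ n) :
    (AvClasses n fun σ => CycAvoids σ ![1,2,4,3] ∧ CycAvoids σ ![1,3,2,4] ∧ CycAvoids σ ![1,3,4,2]).ncard = 3 := by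
  haveI : NeZero n := ⟨by omega⟩
  have hn0 : (0:ℕ) < n := by omega
  have hl : n - 1 < n := by omega
  have h1n : (1:ℕ) < n := by omega
  have key : (AvClasses n fun σ => CycAvoids σ ![1,2,4,3] ∧ CycAvoids σ ![1,3,2,4] ∧ CycAvoids σ ![1,3,4,2])
      = {CycClass (⇑(Equiv.refl (Fin n))), CycClass (⇑(Fin.revPerm : Equiv.Perm (Fin n))),
         CycClass (⇑(sig3 n))} := by
    ext C
    constructor
    · rintro ⟨σ, rfl, ha1, ha2, ha3⟩
      set τ := rotSeq (⇑σ) (σ.symm 0) with hτdef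
      have hbij : Function.Bijective τ := ((Equiv.addRight (σ.symm 0)).trans σ).bijective
      have τ0 : τ 0 = 0 := by
        show σ (0 + σ.symm 0) = 0
        rw [zero_add]
        exact σ.apply_symm_apply 0
      have hA1 : CycAvoids τ ![1,2,4,3] := by
        rintro ⟨s, hc⟩
        exact ha1 ⟨s + σ.symm 0, by rw [← rot_rot]; exact hc⟩
      have hA2 : CycAvoids τ ![1,3,2,4] := by
        rintro ⟨s, hc⟩
        exact ha2 ⟨s + σ.symm 0, by rw [← rot_rot]; exact hc⟩
      have hA3 : CycAvoids τ ![1,3,4,2] := by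
        rintro ⟨s, hc⟩
        exact ha3 ⟨s + σ.symm 0, by rw [← rot_rot]; exact hc⟩
      have hmain := tau_classify hn τ hbij τ0 hA1 hA2 hA3
      simp only [Set.mem_insert_iff, Set.mem_singleton_iff]
      rcases hmain with hc1 | hc2 | ⟨hc31, hc32⟩
      · left
        have hfun : τ = ⇑(Equiv.refl (Fin n)) := funext fun i => Fin.ext (hc1 i)
        rw [← cycClass_rot (⇑σ) (σ.symm 0), ← hτdef, hfun]
      · right; left
        have hfun : τ = rotSeq (⇑(Fin.revPerm : Equiv.Perm (Fin n))) ⟨n - 1, hl⟩ := by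
          funext i
          apply Fin.ext
          have hiv := i.isLt
          have A := add_val_cases (n := n) hn0 i ⟨n - 1, hl⟩
          rw [show ((⟨n - 1, hl⟩ : Fin n)).val = n - 1 from rfl] at A
          show (τ i).val = (Fin.rev (i + ⟨n - 1, hl⟩)).val
          rw [Fin.val_rev]
          rcases Nat.eq_zero_or_pos i.val with h | h
          · have hi0 : i = 0 := Fin.ext h
            have e0 : (τ i).val = 0 := by rw [hi0, τ0]; rfl
            omega
          · have e1 := hc2 i h
            omega
        rw [← cycClass_rot (⇑σ) (σ.symm 0), ← hτdef, hfun, cycClass_rot]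
      · right; right
        have hfun : τ = ⇑(sig3 n) := by
          funext i
          apply Fin.ext
          have B := sig3_val hn i
          show (τ i).val = ((sig3 n) i).val
          rcases B with ⟨B1, B2⟩ | ⟨B1, B2⟩ | ⟨B1, B2⟩
          · rw [B2, show i = (0 : Fin n) from Fin.ext B1, τ0]
            rfl
          · rw [B2, show i = (⟨1, h1n⟩ : Fin n) from Fin.ext B1]
            exact hc31
          · rw [B2]
            exact hc32 i B1
        rw [← cycClass_rot (⇑σ) (σ.symm 0), ← hτdef, hfun]
    · intro hC
      simp only [Set.mem_insert_iff, Set.mem_singleton_iff] at hC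
      rcases hC with h | h | h
      · exact ⟨Equiv.refl (Fin n), h, id_avoids_1243 hn, id_avoids_1324 hn, id_avoids_1342 hn⟩
      · exact ⟨Fin.revPerm, h, rev_avoids_1243 hn, rev_avoids_1324 hn, rev_avoids_1342 hn⟩
      · exact ⟨sig3 n, h, sig3_avoids_1243 hn, sig3_avoids_1324 hn, sig3_avoids_1342 hn⟩
  rw [key]
  rw [Set.ncard_insert_of_notMem (by
      simp only [Set.mem_insert_iff, Set.mem_singleton_iff]
      push_neg
      exact ⟨ne_12 hn, ne_13 hn⟩) (Set.toFinite _),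
    Set.ncard_pair (ne_23 hn)]
end

section
/- For every integer n ≥ 3, the joint generating polynomial of the cyclic descent number and the cyclic peak number over cyclic permutations of length n avoiding both cyclic patterns [1234] and [1342] satisfies Σ_{[σ] ∈ Av_n([1234],[1342])} q^{cdes[σ]} t^{cpk[σ]} = q^{n−2} t + (2n−6) q^{n−2} t^2 + q^{n−1} t. -/
def fA (n k i : ℕ) : ℕ := if i = 0 then 0 else if i ≤ k then k+1-i else n+k-i
/-- family B: 0, n-1, ..., j+1, 1, j, j-1, ..., 2 -/
def fB (n j i : ℕ) : ℕ := if i = 0 then 0 else if i ≤ n-1-j then n-i else if i = n-j then 1 else n+1-i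
/-- inverse of fB -/
def gB (n j v : ℕ) : ℕ := if v = 0 then 0 else if v = 1 then n-j else if v ≤ j then n+1-v else n-v

def mkPerm (n : ℕ) (f g : ℕ → ℕ) (hf : ∀ i, i < n → f i < n) (hg : ∀ i, i < n → g i < n)
    (h1 : ∀ i, i < n → g (f i) = i) (h2 : ∀ i, i < n → f (g i) = i) : Equiv.Perm (Fin n) where
  toFun i := ⟨f i, hf i i.2⟩
  invFun i := ⟨g i, hg i i.2⟩
  left_inv i := Fin.ext (h1 i i.2)
  right_inv i := Fin.ext (h2 i i.2)

lemma fA_lt {n k : ℕ} (h1 : 1 ≤ k) (h2 : k < n) : ∀ i, i < n → fA n k i < n := by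
  intro i hi; unfold fA; split_ifs <;> first | contradiction | omega

lemma fA_invol {n k : ℕ} (h1 : 1 ≤ k) (h2 : k < n) : ∀ i, i < n → fA n k (fA n k i) = i := by
  intro i hi; unfold fA; split_ifs <;> first | contradiction | omega

lemma fB_lt {n j : ℕ} (h1 : 2 ≤ j) (h2 : j ≤ n - 2) (h3 : 3 ≤ n) : ∀ i, i < n → fB n j i < n := by
  intro i hi; unfold fB; split_ifs <;> first | contradiction | omega

lemma gB_lt {n j : ℕ} (h1 : 2 ≤ j) (h2 : j ≤ n - 2) (h3 : 3 ≤ n) : ∀ i, i < n → gB n j i < n := by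
  intro i hi; unfold gB; split_ifs <;> first | contradiction | omega

lemma gB_fB {n j : ℕ} (h1 : 2 ≤ j) (h2 : j ≤ n - 2) (h3 : 3 ≤ n) : ∀ i, i < n → gB n j (fB n j i) = i := by
  intro i hi; unfold fB gB; split_ifs <;> first | contradiction | omega

lemma fB_gB {n j : ℕ} (h1 : 2 ≤ j) (h2 : j ≤ n - 2) (h3 : 3 ≤ n) : ∀ i, i < n → fB n j (gB n j i) = i := by
  intro i hi; unfold fB gB; split_ifs <;> first | contradiction | omega

def permA (n k : ℕ) : Equiv.Perm (Fin n) :=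
  if h : 1 ≤ k ∧ k < n then
    mkPerm n (fA n k) (fA n k) (fA_lt h.1 h.2) (fA_lt h.1 h.2) (fA_invol h.1 h.2) (fA_invol h.1 h.2)
  else 1

def permB (n j : ℕ) : Equiv.Perm (Fin n) :=
  if h : 2 ≤ j ∧ j ≤ n - 2 ∧ 3 ≤ n then
    mkPerm n (fB n j) (gB n j) (fB_lt h.1 h.2.1 h.2.2) (gB_lt h.1 h.2.1 h.2.2)
      (gB_fB h.1 h.2.1 h.2.2) (fB_gB h.1 h.2.1 h.2.2)
  else 1

lemma permA_apply {n k : ℕ} (h1 : 1 ≤ k) (h2 : k < n) (i : Fin n) :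
    (permA n k i : ℕ) = fA n k i := by
  rw [permA, dif_pos ⟨h1, h2⟩]; rfl

lemma permB_apply {n j : ℕ} (h1 : 2 ≤ j) (h2 : j ≤ n - 2) (h3 : 3 ≤ n) (i : Fin n) :
    (permB n j i : ℕ) = fB n j i := by
  rw [permB, dif_pos ⟨h1, h2, h3⟩]; rfl

/-- `Chains v0 v1 v2 v3` : none of the 8 "bad chains" (rotations of 1234 and of 1342
read on a sorted quadruple) holds. -/
def NoChains (a b c d : ℕ) : Prop :=
  ¬(a < b ∧ b < c ∧ c < d) ∧ ¬(d < a ∧ a < b ∧ b < c) ∧ ¬(c < d ∧ d < a ∧ a < b) ∧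
  ¬(b < c ∧ c < d ∧ d < a) ∧
  ¬(a < d ∧ d < b ∧ b < c) ∧ ¬(d < c ∧ c < a ∧ a < b) ∧ ¬(c < b ∧ b < d ∧ d < a) ∧
  ¬(b < a ∧ a < c ∧ c < d)
set_option maxHeartbeats 2000000 in
lemma fA_noChains {n k : ℕ} (h1 : 1 ≤ k) (h2 : k < n) {w x y z : ℕ}
    (hwx : w < x) (hxy : x < y) (hyz : y < z) (hz : z < n) :
    NoChains (fA n k w) (fA n k x) (fA n k y) (fA n k z) := by
  unfold NoChains fA; split_ifs <;> first | contradiction | omega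
set_option maxHeartbeats 2000000 in
lemma fB_noChains {n j : ℕ} (h1 : 2 ≤ j) (h2 : j ≤ n - 2) (h3 : 3 ≤ n) {w x y z : ℕ}
    (hwx : w < x) (hxy : x < y) (hyz : y < z) (hz : z < n) :
    NoChains (fB n j w) (fB n j x) (fB n j y) (fB n j z) := by
  unfold NoChains fB; split_ifs <;> first | contradiction | omega


lemma pat1234_eval : ∀ i : Fin 4, (![1,2,3,4] : Fin 4 → ℕ) i = i.val + 1 := by decide
lemma pat1342_eval : ∀ i : Fin 4, (![1,3,4,2] : Fin 4 → ℕ) i =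
    (if i.val = 0 then 1 else if i.val = 1 then 3 else if i.val = 2 then 4 else 2) := by decide

lemma mod_small {a n : ℕ} (h : a < n) : a % n = a := Nat.mod_eq_of_lt h

lemma shift_add {m a n : ℕ} (hm : m < n) (ha : a < n) : ((m + n - a) % n + a) % n = m := by
  rcases le_or_gt a m with h | h
  · rw [show m + n - a = m - a + n by omega, Nat.add_mod_right,
      mod_small (show m - a < n by omega), show m - a + a = m by omega, mod_small hm]
  · rw [mod_small (show m + n - a < n by omega), show m + n - a + a = m + n by omega,
      Nat.add_mod_right, mod_small hm]

lemma mod_diff {x a n : ℕ} (hax : a ≤ x) (hx : x < n) : (x + n - a) % n = x - a := by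
  rw [show x + n - a = x - a + n by omega, Nat.add_mod_right,
    mod_small (show x - a < n by omega)]

lemma cycContains_of_cycOrder {n : ℕ} {σ : Fin n → Fin n} (π : Fin 4 → ℕ)
    (a b c d : ℕ) (ha : a < n) (hb : b < n) (hc : c < n) (hd : d < n)
    (hcyc : 0 < (b + n - a) % n ∧ (b + n - a) % n < (c + n - a) % n ∧
      (c + n - a) % n < (d + n - a) % n)
    (hiso : ∀ i j : Fin 4, π i < π j ↔
      (σ (if i.val = 0 then ⟨a, ha⟩ else if i.val = 1 then ⟨b, hb⟩
          else if i.val = 2 then ⟨c, hc⟩ else ⟨d, hd⟩) : Fin n) <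
      (σ (if j.val = 0 then ⟨a, ha⟩ else if j.val = 1 then ⟨b, hb⟩
          else if j.val = 2 then ⟨c, hc⟩ else ⟨d, hd⟩))) : CycContains σ π := by
  have hn : 0 < n := by omega
  have e0 : (a + n - a) % n = 0 := by rw [show a + n - a = n by omega, Nat.mod_self]
  refine ⟨⟨a, ha⟩, fun i => ⟨(((if i.val = 0 then a else if i.val = 1 then b
      else if i.val = 2 then c else d) + n - a) % n), Nat.mod_lt _ hn⟩, ?_, ?_⟩
  · intro i j hij
    have hi4 := i.isLt; have hj4 := j.isLt
    rw [Fin.lt_def] at hij ⊢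
    simp only []
    split_ifs <;> omega
  · have hfr : ∀ i : Fin 4,
        (⟨(((if i.val = 0 then a else if i.val = 1 then b
            else if i.val = 2 then c else d) + n - a) % n), Nat.mod_lt _ hn⟩ : Fin n) + ⟨a, ha⟩ =
        (if i.val = 0 then (⟨a, ha⟩ : Fin n) else if i.val = 1 then ⟨b, hb⟩
          else if i.val = 2 then ⟨c, hc⟩ else ⟨d, hd⟩) := by
      intro i
      apply Fin.ext
      rw [Fin.val_add]
      simp only [apply_ite Fin.val]
      split_ifs <;>
        first | exact shift_add ha ha | exact shift_add hb ha
              | exact shift_add hc ha | exact shift_add hd ha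
    intro i j
    simp only [rotSeq]
    rw [hfr i, hfr j]
    exact hiso i j

/-- occurrence of cyclic 1234: positions a<b<c<d (pattern order = sorted order). -/
lemma contains1234 {n : ℕ} {σ : Fin n → Fin n} {a b c d : ℕ}
    (hab : a < b) (hbc : b < c) (hcd : c < d) (hd : d < n)
    (ha : a < n := by omega) (hb : b < n := by omega) (hc : c < n := by omega)
    (v1 : (σ ⟨a, ha⟩).val < (σ ⟨b, hb⟩).val) (v2 : (σ ⟨b, hb⟩).val < (σ ⟨c, hc⟩).val)
    (v3 : (σ ⟨c, hc⟩).val < (σ ⟨d, hd⟩).val) : CycContains σ ![1,2,3,4] := by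
  refine cycContains_of_cycOrder _ a b c d ha hb hc hd ?_ ?_
  · rw [mod_diff (by omega) hb, mod_diff (by omega) hc, mod_diff (by omega) hd]
    omega
  · intro i j
    have hi4 := i.isLt; have hj4 := j.isLt
    rw [pat1234_eval i, pat1234_eval j]
    split_ifs <;> rw [Fin.lt_def] <;> omega

/-- occurrence of linear 1342 at sorted positions a<b<c<d:
values u a < u d < u b < u c. -/
lemma contains1342 {n : ℕ} {σ : Fin n → Fin n} {a b c d : ℕ}
    (hab : a < b) (hbc : b < c) (hcd : c < d) (hd : d < n)
    (ha : a < n := by omega) (hb : b < n := by omega) (hc : c < n := by omega)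
    (v1 : (σ ⟨a, ha⟩).val < (σ ⟨d, hd⟩).val) (v2 : (σ ⟨d, hd⟩).val < (σ ⟨b, hb⟩).val)
    (v3 : (σ ⟨b, hb⟩).val < (σ ⟨c, hc⟩).val) : CycContains σ ![1,3,4,2] := by
  refine cycContains_of_cycOrder _ a b c d ha hb hc hd ?_ ?_
  · rw [mod_diff (by omega) hb, mod_diff (by omega) hc, mod_diff (by omega) hd]
    omega
  · intro i j
    have hi4 := i.isLt; have hj4 := j.isLt
    rw [pat1342_eval i, pat1342_eval j]
    split_ifs <;> rw [Fin.lt_def] <;> omega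

/-- occurrence of linear 4213 at sorted positions a<b<c<d:
values u c < u b < u d < u a; this is cyclic [1342]. -/
lemma contains4213 {n : ℕ} {σ : Fin n → Fin n} {a b c d : ℕ}
    (hab : a < b) (hbc : b < c) (hcd : c < d) (hd : d < n)
    (ha : a < n := by omega) (hb : b < n := by omega) (hc : c < n := by omega)
    (v1 : (σ ⟨c, hc⟩).val < (σ ⟨b, hb⟩).val) (v2 : (σ ⟨b, hb⟩).val < (σ ⟨d, hd⟩).val)
    (v3 : (σ ⟨d, hd⟩).val < (σ ⟨a, ha⟩).val) : CycContains σ ![1,3,4,2] := by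
  -- pattern order: 1 at c, 3 at d, 4 at a (wrapped), 2 at b (wrapped)
  refine cycContains_of_cycOrder _ c d a b hc hd ha hb ?_ ?_
  · rw [mod_diff (by omega) hd, mod_small (show a + n - c < n by omega),
      mod_small (show b + n - c < n by omega)]
    omega
  · intro i j
    have hi4 := i.isLt; have hj4 := j.isLt
    rw [pat1342_eval i, pat1342_eval j]
    split_ifs <;> rw [Fin.lt_def] <;> omega


/-- decreasing chain estimate -/
lemma chain {u : ℕ → ℕ} : ∀ d s, (∀ i, s ≤ i → i < s + d → u (i+1) < u i) →
    u (s + d) + d ≤ u s := by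
  intro d
  induction d with
  | zero => intro s _; simp
  | succ m ih =>
    intro s h
    have h1 : u (s + m + 1) < u (s + m) := h (s + m) (by omega) (by omega)
    have h2 := ih s (fun i hi hi2 => h i hi (by omega))
    have e : s + (m + 1) = (s + m) + 1 := by omega
    rw [e]; omega

lemma classify {n : ℕ} (hn : 3 ≤ n) (u : ℕ → ℕ)
    (h0 : u 0 = 0)
    (hlt : ∀ i, i < n → u i < n)
    (hinj : ∀ i j, i < n → j < n → u i = u j → i = j)
    (hsurj : ∀ v, v < n → ∃ i, i < n ∧ u i = v)
    (H123 : ∀ x y z, 0 < x → x < y → y < z → z < n → ¬(u x < u y ∧ u y < u z))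
    (H231 : ∀ x y z, 0 < x → x < y → y < z → z < n → ¬(u z < u x ∧ u x < u y))
    (H4213 : ∀ w x y z, 0 < w → w < x → x < y → y < z → z < n →
        ¬(u y < u x ∧ u x < u z ∧ u z < u w)) :
    (∃ k, 1 ≤ k ∧ k < n ∧ ∀ i, i < n → u i = fA n k i) ∨
    (∃ j, 2 ≤ j ∧ j ≤ n - 2 ∧ ∀ i, i < n → u i = fB n j i) := by
  have upos : ∀ i, 0 < i → i < n → 0 < u i := by
    intro i hi hi2
    rcases Nat.eq_zero_or_pos (u i) with h | h
    · exact absurd (hinj i 0 hi2 (by omega) (by omega)) (by omega)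
    · exact h
  have Wlem : ∀ i j k, 0 < i → i < j → j < k → k < n → u i < u j →
      u i < u k ∧ u k < u j := by
    intro i j k hi hij hjk hk huij
    constructor
    · by_contra hc
      push_neg at hc
      have hne : u k ≠ u i := fun h => by
        have := hinj k i (by omega) (by omega) h; omega
      exact H231 i j k hi hij hjk hk ⟨by omega, huij⟩
    · by_contra hc
      push_neg at hc
      have hne : u j ≠ u k := fun h => by
        have := hinj j k (by omega) (by omega) h; omega
      exact H123 i j k hi hij hjk hk ⟨huij, by omega⟩
  by_cases hasc : ∃ i, 1 ≤ i ∧ i + 1 < n ∧ u i < u (i+1)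
  · -- there is an ascent; i0 = least ascent position
    classical
    set i0 := Nat.find hasc with hi0def
    obtain ⟨hi01, hi0n, hM⟩ := Nat.find_spec hasc
    rw [← hi0def] at hi01 hi0n hM
    have hmin : ∀ m, m < i0 → ¬(1 ≤ m ∧ m + 1 < n ∧ u m < u (m+1)) :=
      fun m hm => Nat.find_min hasc hm
    have hpre : ∀ i, 1 ≤ i → i < i0 → u (i+1) < u i := by
      intro i h1 h2
      have hni := hmin i h2
      push_neg at hni
      have hlt2 : i + 1 < n := by omega
      have := hni h1 hlt2
      have hne : u (i+1) ≠ u i := fun h => by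
        have := hinj (i+1) i (by omega) (by omega) h; omega
      omega
    have hsufb : ∀ k, i0 + 1 < k → k < n → u i0 < u k ∧ u k < u (i0+1) :=
      fun k hk1 hk2 => Wlem i0 (i0+1) k (by omega) (by omega) hk1 hk2 hM
    have hsufd : ∀ k, i0 + 1 ≤ k → k + 1 < n → u (k+1) < u k := by
      intro k hk1 hk2
      have hik : u i0 < u k := by
        rcases Nat.eq_or_lt_of_le hk1 with h | h
        · rw [← h]; exact hM
        · exact (hsufb k h (by omega)).1
      by_contra hc
      push_neg at hc
      have hne : u k ≠ u (k+1) := fun h => by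
        have := hinj k (k+1) (by omega) (by omega) h; omega
      exact H123 i0 k (k+1) (by omega) (by omega) (by omega) (by omega) ⟨hik, by omega⟩
    -- chain instances
    have chainpre : ∀ s t, 1 ≤ s → s ≤ t → t ≤ i0 → u t + (t - s) ≤ u s := by
      intro s t hs hst hti0
      have := chain (t - s) s (fun i hi hi2 => hpre i (by omega) (by omega))
      rw [show s + (t - s) = t by omega] at this
      exact this
    have chainsuf : ∀ s t, i0 + 1 ≤ s → s ≤ t → t < n → u t + (t - s) ≤ u s := by
      intro s t hs hst htn
      have := chain (t - s) s (fun i hi hi2 => hsufd i (by omega) (by omega))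
      rw [show s + (t - s) = t by omega] at this
      exact this
    have hval1 : u i0 = 1 := by
      obtain ⟨t, htn, hut⟩ := hsurj 1 (by omega)
      have ht0 : t ≠ 0 := fun h => by rw [h, h0] at hut; omega
      rcases Nat.lt_or_ge t i0 with h | h
      · have := chainpre t i0 (by omega) (by omega) (by omega)
        have := upos i0 (by omega) (by omega)
        omega
      · rcases Nat.eq_or_lt_of_le h with h2 | h2
        · rw [h2]; exact hut
        · rcases Nat.lt_or_ge (i0+1) t with h3 | h3
          · have := (hsufb t h3 htn).1
            have := upos i0 (by omega) (by omega)
            omega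
          · have h4 : t = i0 + 1 := by omega
            have := upos i0 (by omega) (by omega)
            rw [h4] at hut; omega
    by_cases hMtop : u (i0+1) = n - 1
    · -- family A with k = i0
      left
      have hu1 : u 1 = i0 := by
        rcases Nat.eq_or_lt_of_le hi01 with h | h
        · rw [← h] at hval1 ⊢; omega
        · have hlow : i0 ≤ u 1 := by
            have := chainpre 1 i0 (by omega) (by omega) (by omega)
            omega
          have hne : u 1 ≠ u (i0+1) := fun hh => by
            have := hinj 1 (i0+1) (by omega) (by omega) hh; omega
          have hu1lt : u 1 < u (i0+1) := by
            have := hlt 1 (by omega); omega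
          rcases Nat.lt_or_ge (i0+2) n with hr | hr
          · -- suffix nonempty
            have hW := Wlem 1 (i0+1) (i0+2) (by omega) (by omega) (by omega) (by omega) hu1lt
            have hWn := Wlem 1 (i0+1) (n-1) (by omega) (by omega) (by omega) (by omega) hu1lt
            have hc := chainsuf (i0+2) (n-1) (by omega) (by omega) (by omega)
            have := (hsufb (i0+2) (by omega) (by omega)).2
            omega
          · have := hlt 1 (by omega); omega
      refine ⟨i0, by omega, by omega, ?_⟩
      intro i hi
      unfold fA
      split_ifs with c1 c2
      · rw [c1]; exact h0
      · -- 1 ≤ i ≤ i0 : u i = i0 + 1 - i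
        have hA := chainpre i i0 (by omega) (by omega) (by omega)
        have hB := chainpre 1 i (by omega) (by omega) (by omega)
        omega
      · -- i ≥ i0 + 1 : u i = n + i0 - i
        have hup := chainsuf (i0+1) i (by omega) (by omega) (by omega)
        rcases Nat.eq_or_lt_of_le (show i0 + 1 ≤ i by omega) with h | h
        · rw [← h]; omega
        · have hlo := chainsuf i (n-1) (by omega) (by omega) (by omega)
          have hWn : u 1 < u (n-1) := by
            have hu1lt : u 1 < u (i0+1) := by omega
            exact (Wlem 1 (i0+1) (n-1) (by omega) (by omega) (by omega) (by omega) hu1lt).1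
          omega
    · -- family B with j = u (i0+1)
      right
      set M := u (i0+1) with hMdef
      have hMn : M < n := hlt (i0+1) (by omega)
      have hM2 : 2 ≤ M := by omega
      have hMn2 : M ≤ n - 2 := by omega
      have hu1 : u 1 = n - 1 := by
        obtain ⟨t, htn, hut⟩ := hsurj (n-1) (by omega)
        have ht0 : t ≠ 0 := fun h => by rw [h, h0] at hut; omega
        have hti0 : t ≤ i0 := by
          by_contra hc
          push_neg at hc
          rcases Nat.lt_or_ge (i0+1) t with h | h
          · have := (hsufb t h htn).2; omega
          · have h4 : t = i0 + 1 := by omega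
            rw [h4] at hut; omega
        rcases Nat.eq_or_lt_of_le (show 1 ≤ t by omega) with h | h
        · rw [← h] at hut; exact hut
        · exfalso
          have := chainpre 1 t (by omega) (by omega) (by omega)
          have := hlt 1 (by omega)
          omega
      have hi02 : 2 ≤ i0 := by
        rcases Nat.eq_or_lt_of_le hi01 with h | h
        · exfalso; rw [← h] at hval1; omega
        · omega
      -- no middle values in the prefix
      have hbig : ∀ x, 1 ≤ x → x < i0 → M < u x := by
        intro x hx1 hx2
        have hne : u x ≠ M := fun h => by
          have := hinj x (i0+1) (by omega) (by omega) h; omega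
        by_contra hc
        push_neg at hc
        have hxM : u x < M := by omega
        have hx2' : 2 ≤ x := by
          rcases Nat.eq_or_lt_of_le hx1 with h | h
          · exfalso; rw [← h] at hxM; omega
          · omega
        have hux1 : 1 < u x := by
          have hne1 : u x ≠ 1 := fun h => by
            have := hinj x i0 (by omega) (by omega) (by omega); omega
          have := upos x (by omega) (by omega)
          omega
        exact H4213 1 x i0 (i0+1) (by omega) (by omega) (by omega) (by omega) (by omega)
          ⟨by omega, by omega, by omega⟩
      have hi0M : i0 = n - M := by
        have hupper : i0 ≤ n - M := by
          have hb := hbig (i0-1) (by omega) (by omega)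
          have := chainpre 1 (i0-1) (by omega) (by omega) (by omega)
          omega
        have hlower : n - M ≤ i0 := by
          rcases Nat.lt_or_ge (i0+2) n with hr | hr
          · have h1 := (hsufb (i0+2) (by omega) (by omega)).2
            have h2 := (hsufb (n-1) (by omega) (by omega)).1
            have := chainsuf (i0+2) (n-1) (by omega) (by omega) (by omega)
            omega
          · omega
        omega
      refine ⟨M, hM2, hMn2, ?_⟩
      intro i hi
      unfold fB
      split_ifs with c1 c2 c3
      · rw [c1]; exact h0
      · -- 1 ≤ i ≤ n-1-M = i0-1 : u i = n - i
        have hA := chainpre 1 i (by omega) (by omega) (by omega)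
        have hB := chainpre i (i0-1) (by omega) (by omega) (by omega)
        have hb := hbig (i0-1) (by omega) (by omega)
        omega
      · -- i = n - M = i0 : u i = 1
        rw [c3, ← hi0M]; exact hval1
      · -- i ≥ i0+1 : u i = n + 1 - i
        have hii : i0 + 1 ≤ i := by omega
        have hup := chainsuf (i0+1) i (by omega) (by omega) (by omega)
        rcases Nat.eq_or_lt_of_le hii with h | h
        · rw [← h]; omega
        · have hlo := chainsuf i (n-1) (by omega) (by omega) (by omega)
          have h2 := (hsufb (n-1) (by omega) (by omega)).1
          omega
  · -- no ascent: strictly decreasing, family A with k = n-1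
    push_neg at hasc
    have hdesc : ∀ i, 1 ≤ i → i + 1 < n → u (i+1) < u i := by
      intro i h1 h2
      have := hasc i h1 h2
      have hne : u (i+1) ≠ u i := fun h => by
        have := hinj (i+1) i (by omega) (by omega) h; omega
      omega
    have chaind : ∀ s t, 1 ≤ s → s ≤ t → t < n → u t + (t - s) ≤ u s := by
      intro s t hs hst htn
      have := chain (t - s) s (fun i hi hi2 => hdesc i (by omega) (by omega))
      rw [show s + (t - s) = t by omega] at this
      exact this
    left
    refine ⟨n - 1, by omega, by omega, ?_⟩
    intro i hi
    unfold fA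
    split_ifs with c1 c2
    · rw [c1]; exact h0
    · have hA := chaind i (n-1) (by omega) (by omega) (by omega)
      have hB := chaind 1 i (by omega) (by omega) (by omega)
      have := upos (n-1) (by omega) (by omega)
      have := hlt 1 (by omega)
      omega
    · omega

-- minimal context for testing extraction lemmas
lemma chain_of_iso1234 {n : ℕ} {a b c d : Fin n}
    (h : ∀ i j : Fin 4, (![1,2,3,4] : Fin 4 → ℕ) i < ![1,2,3,4] j ↔
      (![a,b,c,d] i : Fin n) < ![a,b,c,d] j) : a < b ∧ b < c ∧ c < d := by
  refine ⟨?_, ?_, ?_⟩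
  · have := (h 0 1).1 (by decide); simpa using this
  · have := (h 1 2).1 (by decide); simpa using this
  · have := (h 2 3).1 (by decide); simpa using this

lemma chain_of_iso1342 {n : ℕ} {a b c d : Fin n}
    (h : ∀ i j : Fin 4, (![1,3,4,2] : Fin 4 → ℕ) i < ![1,3,4,2] j ↔
      (![a,b,c,d] i : Fin n) < ![a,b,c,d] j) : a < d ∧ d < b ∧ b < c := by
  refine ⟨?_, ?_, ?_⟩
  · have := (h 0 3).1 (by decide); simpa using this
  · have := (h 3 1).1 (by decide); simpa using this
  · have := (h 1 2).1 (by decide); simpa using this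

lemma mod_big {a n : ℕ} (h1 : n ≤ a) (h2 : a < 2*n) : a % n = a - n := by
  rw [Nat.mod_eq_sub_mod h1, Nat.mod_eq_of_lt (by omega)]

lemma quad_of_cycContains {n : ℕ} {σ : Fin n → Fin n} {π : Fin 4 → ℕ}
    (h : CycContains σ π) :
    ∃ w x y z : Fin n, w < x ∧ x < y ∧ y < z ∧
      ((∀ i j, π i < π j ↔ (![σ w, σ x, σ y, σ z] i : Fin n) < ![σ w, σ x, σ y, σ z] j) ∨
       (∀ i j, π i < π j ↔ (![σ x, σ y, σ z, σ w] i : Fin n) < ![σ x, σ y, σ z, σ w] j) ∨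
       (∀ i j, π i < π j ↔ (![σ y, σ z, σ w, σ x] i : Fin n) < ![σ y, σ z, σ w, σ x] j) ∨
       (∀ i j, π i < π j ↔ (![σ z, σ w, σ x, σ y] i : Fin n) < ![σ z, σ w, σ x, σ y] j)) := by
  obtain ⟨r, f, hm, hiso⟩ := h
  have h01 : f 0 < f 1 := hm (by decide)
  have h12 : f 1 < f 2 := hm (by decide)
  have h23 : f 2 < f 3 := hm (by decide)
  rw [Fin.lt_def] at h01 h12 h23
  have l0 := (f 0).isLt; have l1 := (f 1).isLt; have l2 := (f 2).isLt
  have l3 := (f 3).isLt; have lr := r.isLt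
  set p : Fin 4 → Fin n := fun i => f i + r with hp
  have hv : ∀ i, (p i).val = ((f i).val + r.val) % n := fun i => Fin.val_add _ _
  have hrot : ∀ i j : Fin 4, π i < π j ↔ σ (p i) < σ (p j) := by
    intro i j; rw [hiso i j]; simp [rotSeq, hp]
  by_cases c3 : (f 3).val + r.val < n
  · have e0 : (p 0).val = (f 0).val + r.val := by rw [hv]; exact mod_small (by omega)
    have e1 : (p 1).val = (f 1).val + r.val := by rw [hv]; exact mod_small (by omega)
    have e2 : (p 2).val = (f 2).val + r.val := by rw [hv]; exact mod_small (by omega)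
    have e3 : (p 3).val = (f 3).val + r.val := by rw [hv]; exact mod_small (by omega)
    refine ⟨p 0, p 1, p 2, p 3, ?_, ?_, ?_, Or.inl ?_⟩
    · rw [Fin.lt_def, e0, e1]; omega
    · rw [Fin.lt_def, e1, e2]; omega
    · rw [Fin.lt_def, e2, e3]; omega
    · intro i j; rw [hrot i j]; fin_cases i <;> fin_cases j <;> rfl
  · by_cases c2 : (f 2).val + r.val < n
    · have e0 : (p 0).val = (f 0).val + r.val := by rw [hv]; exact mod_small (by omega)
      have e1 : (p 1).val = (f 1).val + r.val := by rw [hv]; exact mod_small (by omega)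
      have e2 : (p 2).val = (f 2).val + r.val := by rw [hv]; exact mod_small (by omega)
      have e3 : (p 3).val = (f 3).val + r.val - n := by
        rw [hv]; exact mod_big (by omega) (by omega)
      refine ⟨p 3, p 0, p 1, p 2, ?_, ?_, ?_, Or.inr (Or.inl ?_)⟩
      · rw [Fin.lt_def, e3, e0]; omega
      · rw [Fin.lt_def, e0, e1]; omega
      · rw [Fin.lt_def, e1, e2]; omega
      · intro i j; rw [hrot i j]; fin_cases i <;> fin_cases j <;> rfl
    · by_cases c1 : (f 1).val + r.val < n
      · have e0 : (p 0).val = (f 0).val + r.val := by rw [hv]; exact mod_small (by omega)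
        have e1 : (p 1).val = (f 1).val + r.val := by rw [hv]; exact mod_small (by omega)
        have e2 : (p 2).val = (f 2).val + r.val - n := by
          rw [hv]; exact mod_big (by omega) (by omega)
        have e3 : (p 3).val = (f 3).val + r.val - n := by
          rw [hv]; exact mod_big (by omega) (by omega)
        refine ⟨p 2, p 3, p 0, p 1, ?_, ?_, ?_, Or.inr (Or.inr (Or.inl ?_))⟩
        · rw [Fin.lt_def, e2, e3]; omega
        · rw [Fin.lt_def, e3, e0]; omega
        · rw [Fin.lt_def, e0, e1]; omega
        · intro i j; rw [hrot i j]; fin_cases i <;> fin_cases j <;> rfl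
      · by_cases c0 : (f 0).val + r.val < n
        · have e0 : (p 0).val = (f 0).val + r.val := by rw [hv]; exact mod_small (by omega)
          have e1 : (p 1).val = (f 1).val + r.val - n := by
            rw [hv]; exact mod_big (by omega) (by omega)
          have e2 : (p 2).val = (f 2).val + r.val - n := by
            rw [hv]; exact mod_big (by omega) (by omega)
          have e3 : (p 3).val = (f 3).val + r.val - n := by
            rw [hv]; exact mod_big (by omega) (by omega)
          refine ⟨p 1, p 2, p 3, p 0, ?_, ?_, ?_, Or.inr (Or.inr (Or.inr ?_))⟩
          · rw [Fin.lt_def, e1, e2]; omega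
          · rw [Fin.lt_def, e2, e3]; omega
          · rw [Fin.lt_def, e3, e0]; omega
          · intro i j; rw [hrot i j]; fin_cases i <;> fin_cases j <;> rfl
        · have e0 : (p 0).val = (f 0).val + r.val - n := by
            rw [hv]; exact mod_big (by omega) (by omega)
          have e1 : (p 1).val = (f 1).val + r.val - n := by
            rw [hv]; exact mod_big (by omega) (by omega)
          have e2 : (p 2).val = (f 2).val + r.val - n := by
            rw [hv]; exact mod_big (by omega) (by omega)
          have e3 : (p 3).val = (f 3).val + r.val - n := by
            rw [hv]; exact mod_big (by omega) (by omega)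
          refine ⟨p 0, p 1, p 2, p 3, ?_, ?_, ?_, Or.inl ?_⟩
          · rw [Fin.lt_def, e0, e1]; omega
          · rw [Fin.lt_def, e1, e2]; omega
          · rw [Fin.lt_def, e2, e3]; omega
          · intro i j; rw [hrot i j]; fin_cases i <;> fin_cases j <;> rfl

/-! Families avoid both cyclic patterns -/

lemma permA_avoids1234 {n k : ℕ} (h1 : 1 ≤ k) (h2 : k < n) :
    CycAvoids ⇑(permA n k) ![1,2,3,4] := by
  intro h
  obtain ⟨w, x, y, z, hwx, hxy, hyz, hd⟩ := quad_of_cycContains h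
  have hz := z.isLt
  rw [Fin.lt_def] at hwx hxy hyz
  obtain ⟨n1, n2, n3, n4, n5, n6, n7, n8⟩ := fA_noChains h1 h2 hwx hxy hyz hz
  have ew := permA_apply h1 h2 w
  have ex := permA_apply h1 h2 x
  have ey := permA_apply h1 h2 y
  have ez := permA_apply h1 h2 z
  rcases hd with hh | hh | hh | hh
  · obtain ⟨c1, c2, c3⟩ := chain_of_iso1234 hh
    rw [Fin.lt_def, ew, ex] at c1; rw [Fin.lt_def, ex, ey] at c2
    rw [Fin.lt_def, ey, ez] at c3
    exact n1 ⟨c1, c2, c3⟩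
  · obtain ⟨c1, c2, c3⟩ := chain_of_iso1234 hh
    rw [Fin.lt_def, ex, ey] at c1; rw [Fin.lt_def, ey, ez] at c2
    rw [Fin.lt_def, ez, ew] at c3
    exact n4 ⟨c1, c2, c3⟩
  · obtain ⟨c1, c2, c3⟩ := chain_of_iso1234 hh
    rw [Fin.lt_def, ey, ez] at c1; rw [Fin.lt_def, ez, ew] at c2
    rw [Fin.lt_def, ew, ex] at c3
    exact n3 ⟨c1, c2, c3⟩
  · obtain ⟨c1, c2, c3⟩ := chain_of_iso1234 hh
    rw [Fin.lt_def, ez, ew] at c1; rw [Fin.lt_def, ew, ex] at c2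
    rw [Fin.lt_def, ex, ey] at c3
    exact n2 ⟨c1, c2, c3⟩

lemma permA_avoids1342 {n k : ℕ} (h1 : 1 ≤ k) (h2 : k < n) :
    CycAvoids ⇑(permA n k) ![1,3,4,2] := by
  intro h
  obtain ⟨w, x, y, z, hwx, hxy, hyz, hd⟩ := quad_of_cycContains h
  have hz := z.isLt
  rw [Fin.lt_def] at hwx hxy hyz
  obtain ⟨n1, n2, n3, n4, n5, n6, n7, n8⟩ := fA_noChains h1 h2 hwx hxy hyz hz
  have ew := permA_apply h1 h2 w
  have ex := permA_apply h1 h2 x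
  have ey := permA_apply h1 h2 y
  have ez := permA_apply h1 h2 z
  rcases hd with hh | hh | hh | hh
  · obtain ⟨c1, c2, c3⟩ := chain_of_iso1342 hh
    rw [Fin.lt_def, ew, ez] at c1; rw [Fin.lt_def, ez, ex] at c2
    rw [Fin.lt_def, ex, ey] at c3
    exact n5 ⟨c1, c2, c3⟩
  · obtain ⟨c1, c2, c3⟩ := chain_of_iso1342 hh
    rw [Fin.lt_def, ex, ew] at c1; rw [Fin.lt_def, ew, ey] at c2
    rw [Fin.lt_def, ey, ez] at c3
    exact n8 ⟨c1, c2, c3⟩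
  · obtain ⟨c1, c2, c3⟩ := chain_of_iso1342 hh
    rw [Fin.lt_def, ey, ex] at c1; rw [Fin.lt_def, ex, ez] at c2
    rw [Fin.lt_def, ez, ew] at c3
    exact n7 ⟨c1, c2, c3⟩
  · obtain ⟨c1, c2, c3⟩ := chain_of_iso1342 hh
    rw [Fin.lt_def, ez, ey] at c1; rw [Fin.lt_def, ey, ew] at c2
    rw [Fin.lt_def, ew, ex] at c3
    exact n6 ⟨c1, c2, c3⟩

lemma permB_avoids1234 {n j : ℕ} (h1 : 2 ≤ j) (h2 : j ≤ n - 2) (hn : 3 ≤ n) :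
    CycAvoids ⇑(permB n j) ![1,2,3,4] := by
  intro h
  obtain ⟨w, x, y, z, hwx, hxy, hyz, hd⟩ := quad_of_cycContains h
  have hz := z.isLt
  rw [Fin.lt_def] at hwx hxy hyz
  obtain ⟨n1, n2, n3, n4, n5, n6, n7, n8⟩ := fB_noChains h1 h2 hn hwx hxy hyz hz
  have ew := permB_apply h1 h2 hn w
  have ex := permB_apply h1 h2 hn x
  have ey := permB_apply h1 h2 hn y
  have ez := permB_apply h1 h2 hn z
  rcases hd with hh | hh | hh | hh
  · obtain ⟨c1, c2, c3⟩ := chain_of_iso1234 hh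
    rw [Fin.lt_def, ew, ex] at c1; rw [Fin.lt_def, ex, ey] at c2
    rw [Fin.lt_def, ey, ez] at c3
    exact n1 ⟨c1, c2, c3⟩
  · obtain ⟨c1, c2, c3⟩ := chain_of_iso1234 hh
    rw [Fin.lt_def, ex, ey] at c1; rw [Fin.lt_def, ey, ez] at c2
    rw [Fin.lt_def, ez, ew] at c3
    exact n4 ⟨c1, c2, c3⟩
  · obtain ⟨c1, c2, c3⟩ := chain_of_iso1234 hh
    rw [Fin.lt_def, ey, ez] at c1; rw [Fin.lt_def, ez, ew] at c2
    rw [Fin.lt_def, ew, ex] at c3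
    exact n3 ⟨c1, c2, c3⟩
  · obtain ⟨c1, c2, c3⟩ := chain_of_iso1234 hh
    rw [Fin.lt_def, ez, ew] at c1; rw [Fin.lt_def, ew, ex] at c2
    rw [Fin.lt_def, ex, ey] at c3
    exact n2 ⟨c1, c2, c3⟩

lemma permB_avoids1342 {n j : ℕ} (h1 : 2 ≤ j) (h2 : j ≤ n - 2) (hn : 3 ≤ n) :
    CycAvoids ⇑(permB n j) ![1,3,4,2] := by
  intro h
  obtain ⟨w, x, y, z, hwx, hxy, hyz, hd⟩ := quad_of_cycContains h
  have hz := z.isLt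
  rw [Fin.lt_def] at hwx hxy hyz
  obtain ⟨n1, n2, n3, n4, n5, n6, n7, n8⟩ := fB_noChains h1 h2 hn hwx hxy hyz hz
  have ew := permB_apply h1 h2 hn w
  have ex := permB_apply h1 h2 hn x
  have ey := permB_apply h1 h2 hn y
  have ez := permB_apply h1 h2 hn z
  rcases hd with hh | hh | hh | hh
  · obtain ⟨c1, c2, c3⟩ := chain_of_iso1342 hh
    rw [Fin.lt_def, ew, ez] at c1; rw [Fin.lt_def, ez, ex] at c2
    rw [Fin.lt_def, ex, ey] at c3
    exact n5 ⟨c1, c2, c3⟩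
  · obtain ⟨c1, c2, c3⟩ := chain_of_iso1342 hh
    rw [Fin.lt_def, ex, ew] at c1; rw [Fin.lt_def, ew, ey] at c2
    rw [Fin.lt_def, ey, ez] at c3
    exact n8 ⟨c1, c2, c3⟩
  · obtain ⟨c1, c2, c3⟩ := chain_of_iso1342 hh
    rw [Fin.lt_def, ey, ex] at c1; rw [Fin.lt_def, ex, ez] at c2
    rw [Fin.lt_def, ez, ew] at c3
    exact n7 ⟨c1, c2, c3⟩
  · obtain ⟨c1, c2, c3⟩ := chain_of_iso1342 hh
    rw [Fin.lt_def, ez, ey] at c1; rw [Fin.lt_def, ey, ew] at c2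
    rw [Fin.lt_def, ew, ex] at c3
    exact n6 ⟨c1, c2, c3⟩

/-! Membership characterization -/

lemma mem_iff {n : ℕ} (hn : 3 ≤ n) (σ : Equiv.Perm (Fin n)) :
    (σ ⟨0, Nat.lt_of_lt_of_le (Nat.succ_pos 2) hn⟩ = ⟨0, Nat.lt_of_lt_of_le (Nat.succ_pos 2) hn⟩ ∧ CycAvoids ⇑σ ![1,2,3,4] ∧ CycAvoids ⇑σ ![1,3,4,2])
    ↔ σ ∈ (Finset.Icc 1 (n-1)).image (permA n) ∪ (Finset.Icc 2 (n-2)).image (permB n) := by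
  constructor
  · rintro ⟨h00, hA, hB⟩
    set u : ℕ → ℕ := fun i => if h : i < n then (σ ⟨i, h⟩ : ℕ) else 0 with hu
    have hueq : ∀ (i : ℕ) (h : i < n), u i = (σ ⟨i, h⟩ : ℕ) := fun i h => dif_pos h
    have h0 : u 0 = 0 := by rw [hueq 0 (by omega), h00]
    have hlt : ∀ i, i < n → u i < n := by
      intro i h; rw [hueq i h]; exact (σ ⟨i, h⟩).isLt
    have hinj : ∀ i j, i < n → j < n → u i = u j → i = j := by
      intro i j hi hj hij
      rw [hueq i hi, hueq j hj] at hij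
      have := σ.injective (Fin.val_injective hij)
      simpa [Fin.mk.injEq] using this
    have hsurj : ∀ v, v < n → ∃ i, i < n ∧ u i = v := by
      intro v hv
      refine ⟨(σ.symm ⟨v, hv⟩).val, (σ.symm ⟨v, hv⟩).isLt, ?_⟩
      rw [hueq _ (σ.symm ⟨v, hv⟩).isLt]
      have he : (⟨(σ.symm ⟨v, hv⟩).val, (σ.symm ⟨v, hv⟩).isLt⟩ : Fin n) = σ.symm ⟨v, hv⟩ :=
        Fin.eta _ _
      rw [he, Equiv.apply_symm_apply]
    have upos' : ∀ i, 0 < i → (h : i < n) → 0 < u i := by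
      intro i hi h
      rcases Nat.eq_zero_or_pos (u i) with hz | hz
      · exact absurd (hinj i 0 h (by omega) (by omega)) (by omega)
      · exact hz
    have H123 : ∀ x y z, 0 < x → x < y → y < z → z < n → ¬(u x < u y ∧ u y < u z) := by
      rintro x y z hx hxy hyz hz ⟨c1, c2⟩
      refine hA (contains1234 (a := 0) (b := x) (c := y) (d := z) hx hxy hyz hz
        (by omega) (by omega) (by omega) ?_ ?_ ?_)
      · rw [← hueq 0 (by omega), ← hueq x (by omega)]
        have := upos' x hx (by omega); omega
      · rw [← hueq x (by omega), ← hueq y (by omega)]; exact c1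
      · rw [← hueq y (by omega), ← hueq z (by omega)]; exact c2
    have H231 : ∀ x y z, 0 < x → x < y → y < z → z < n → ¬(u z < u x ∧ u x < u y) := by
      rintro x y z hx hxy hyz hz ⟨c1, c2⟩
      refine hB (contains1342 (a := 0) (b := x) (c := y) (d := z) hx hxy hyz hz
        (by omega) (by omega) (by omega) ?_ ?_ ?_)
      · rw [← hueq 0 (by omega), ← hueq z (by omega)]
        have := upos' z (by omega) (by omega); omega
      · rw [← hueq z (by omega), ← hueq x (by omega)]; exact c1
      · rw [← hueq x (by omega), ← hueq y (by omega)]; exact c2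
    have H4213 : ∀ w x y z, 0 < w → w < x → x < y → y < z → z < n →
        ¬(u y < u x ∧ u x < u z ∧ u z < u w) := by
      rintro w x y z hw hwx hxy hyz hz ⟨c1, c2, c3⟩
      refine hB (contains4213 (a := w) (b := x) (c := y) (d := z) hwx hxy hyz hz
        (by omega) (by omega) (by omega) ?_ ?_ ?_)
      · rw [← hueq y (by omega), ← hueq x (by omega)]; exact c1
      · rw [← hueq x (by omega), ← hueq z (by omega)]; exact c2
      · rw [← hueq z (by omega), ← hueq w (by omega)]; exact c3
    rcases classify hn u h0 hlt hinj hsurj H123 H231 H4213 with ⟨k, hk1, hk2, hform⟩ |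
      ⟨j, hj1, hj2, hform⟩
    · refine Finset.mem_union_left _ (Finset.mem_image.2 ⟨k, ?_, ?_⟩)
      · rw [Finset.mem_Icc]; omega
      · symm
        apply Equiv.ext
        intro i
        apply Fin.val_injective
        rw [permA_apply hk1 hk2]
        have h5 := hform i.val i.isLt
        rw [hueq i.val i.isLt] at h5
        simpa [Fin.eta] using h5
    · refine Finset.mem_union_right _ (Finset.mem_image.2 ⟨j, ?_, ?_⟩)
      · rw [Finset.mem_Icc]; omega
      · symm
        apply Equiv.ext
        intro i
        apply Fin.val_injective
        rw [permB_apply hj1 hj2 hn]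
        have h5 := hform i.val i.isLt
        rw [hueq i.val i.isLt] at h5
        simpa [Fin.eta] using h5
  · intro hmem
    rcases Finset.mem_union.1 hmem with hm | hm
    · obtain ⟨k, hk, hσ⟩ := Finset.mem_image.1 hm
      rw [Finset.mem_Icc] at hk
      have hk1 : 1 ≤ k := hk.1
      have hk2 : k < n := by omega
      subst hσ
      refine ⟨?_, permA_avoids1234 hk1 hk2, permA_avoids1342 hk1 hk2⟩
      apply Fin.val_injective
      rw [permA_apply hk1 hk2]
      simp [fA]
    · obtain ⟨j, hj, hσ⟩ := Finset.mem_image.1 hm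
      rw [Finset.mem_Icc] at hj
      subst hσ
      refine ⟨?_, permB_avoids1234 hj.1 hj.2 hn, permB_avoids1342 hj.1 hj.2 hn⟩
      apply Fin.val_injective
      rw [permB_apply hj.1 hj.2 hn]
      simp [fB]

/-! cdes and cpk of the families -/

lemma cdes_permA {n k : ℕ} (hn : 3 ≤ n) (h1 : 1 ≤ k) (h2 : k ≤ n - 2) :
    cdes ⇑(permA n k) = n - 2 := by
  have hkn : k < n := by omega
  have hset : (Finset.univ.filter fun i : Fin n =>
      ¬ (⇑(permA n k) ⟨(↑i + 1) % n, Nat.mod_lt _ i.pos⟩ < ⇑(permA n k) i)) =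
      {(⟨0, by omega⟩ : Fin n), ⟨k, by omega⟩} := by
    ext ⟨iv, hiv⟩
    simp only [Finset.mem_filter, Finset.mem_univ, true_and, Finset.mem_insert,
      Finset.mem_singleton, Fin.mk.injEq]
    rw [Fin.lt_def, permA_apply h1 hkn, permA_apply h1 hkn]
    simp only [Fin.val_mk]
    rcases Nat.lt_or_ge (iv + 1) n with hc | hc
    · rw [mod_small hc]
      simp only [fA]; split_ifs <;> (try simp only [iff_false, iff_true, false_or, or_false]) <;> first | contradiction | omega
    · rw [show (iv + 1) % n = 0 by rw [show iv + 1 = n by omega]; exact Nat.mod_self n]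
      simp only [fA]; split_ifs <;> (try simp only [iff_false, iff_true, false_or, or_false]) <;> first | contradiction | omega
  have hcard := Finset.card_filter_add_card_filter_not (s := (Finset.univ : Finset (Fin n)))
    (p := fun i : Fin n => ⇑(permA n k) ⟨(↑i + 1) % n, Nat.mod_lt _ i.pos⟩ < ⇑(permA n k) i)
  rw [hset] at hcard
  have hc2 : ({(⟨0, by omega⟩ : Fin n), ⟨k, by omega⟩} : Finset (Fin n)).card = 2 := by
    rw [Finset.card_insert_of_notMem (by simp [Fin.ext_iff]; omega), Finset.card_singleton]
  rw [hc2, Finset.card_univ, Fintype.card_fin] at hcard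
  unfold cdes
  omega

lemma cdes_permA_top {n : ℕ} (hn : 3 ≤ n) : cdes ⇑(permA n (n-1)) = n - 1 := by
  have h1 : 1 ≤ n - 1 := by omega
  have hkn : n - 1 < n := by omega
  have hset : (Finset.univ.filter fun i : Fin n =>
      ¬ (⇑(permA n (n-1)) ⟨(↑i + 1) % n, Nat.mod_lt _ i.pos⟩ < ⇑(permA n (n-1)) i)) =
      {(⟨0, by omega⟩ : Fin n)} := by
    ext ⟨iv, hiv⟩
    simp only [Finset.mem_filter, Finset.mem_univ, true_and, Finset.mem_singleton, Fin.mk.injEq]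
    rw [Fin.lt_def, permA_apply h1 hkn, permA_apply h1 hkn]
    simp only [Fin.val_mk]
    rcases Nat.lt_or_ge (iv + 1) n with hc | hc
    · rw [mod_small hc]
      simp only [fA]; split_ifs <;> (try simp only [iff_false, iff_true, false_or, or_false]) <;> first | contradiction | omega
    · rw [show (iv + 1) % n = 0 by rw [show iv + 1 = n by omega]; exact Nat.mod_self n]
      simp only [fA]; split_ifs <;> (try simp only [iff_false, iff_true, false_or, or_false]) <;> first | contradiction | omega
  have hcard := Finset.card_filter_add_card_filter_not (s := (Finset.univ : Finset (Fin n)))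
    (p := fun i : Fin n => ⇑(permA n (n-1)) ⟨(↑i + 1) % n, Nat.mod_lt _ i.pos⟩ < ⇑(permA n (n-1)) i)
  rw [hset] at hcard
  rw [Finset.card_singleton, Finset.card_univ, Fintype.card_fin] at hcard
  unfold cdes
  omega

lemma cdes_permB {n j : ℕ} (hn : 3 ≤ n) (h1 : 2 ≤ j) (h2 : j ≤ n - 2) :
    cdes ⇑(permB n j) = n - 2 := by
  have hset : (Finset.univ.filter fun i : Fin n =>
      ¬ (⇑(permB n j) ⟨(↑i + 1) % n, Nat.mod_lt _ i.pos⟩ < ⇑(permB n j) i)) =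
      {(⟨0, by omega⟩ : Fin n), ⟨n - j, by omega⟩} := by
    ext ⟨iv, hiv⟩
    simp only [Finset.mem_filter, Finset.mem_univ, true_and, Finset.mem_insert,
      Finset.mem_singleton, Fin.mk.injEq]
    rw [Fin.lt_def, permB_apply h1 h2 hn, permB_apply h1 h2 hn]
    simp only [Fin.val_mk]
    rcases Nat.lt_or_ge (iv + 1) n with hc | hc
    · rw [mod_small hc]
      simp only [fB]; split_ifs <;> (try simp only [iff_false, iff_true, false_or, or_false]) <;> first | contradiction | omega
    · rw [show (iv + 1) % n = 0 by rw [show iv + 1 = n by omega]; exact Nat.mod_self n]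
      simp only [fB]; split_ifs <;> (try simp only [iff_false, iff_true, false_or, or_false]) <;> first | contradiction | omega
  have hcard := Finset.card_filter_add_card_filter_not (s := (Finset.univ : Finset (Fin n)))
    (p := fun i : Fin n => ⇑(permB n j) ⟨(↑i + 1) % n, Nat.mod_lt _ i.pos⟩ < ⇑(permB n j) i)
  rw [hset] at hcard
  have hc2 : ({(⟨0, by omega⟩ : Fin n), ⟨n - j, by omega⟩} : Finset (Fin n)).card = 2 := by
    rw [Finset.card_insert_of_notMem (by simp [Fin.ext_iff]; omega), Finset.card_singleton]
  rw [hc2, Finset.card_univ, Fintype.card_fin] at hcard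
  unfold cdes
  omega

lemma cpk_permA_one {n : ℕ} (hn : 3 ≤ n) : cpk ⇑(permA n 1) = 1 := by
  have h1 : 1 ≤ 1 := le_refl 1
  have hkn : 1 < n := by omega
  unfold cpk
  have hset : (Finset.univ.filter fun i : Fin n =>
      ⇑(permA n 1) ⟨(↑i + (n - 1)) % n, Nat.mod_lt _ i.pos⟩ < ⇑(permA n 1) i ∧
      ⇑(permA n 1) ⟨(↑i + 1) % n, Nat.mod_lt _ i.pos⟩ < ⇑(permA n 1) i) =
      {(⟨2, by omega⟩ : Fin n)} := by
    ext ⟨iv, hiv⟩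
    simp only [Finset.mem_filter, Finset.mem_univ, true_and, Finset.mem_singleton, Fin.mk.injEq]
    simp only [Fin.lt_def, permA_apply h1 hkn, Fin.val_mk]
    rcases Nat.eq_zero_or_pos iv with h0 | h0
    · subst h0
      rw [show (0 + (n-1)) % n = n - 1 by rw [Nat.zero_add]; exact mod_small (by omega),
        show (0 + 1) % n = 1 by rw [Nat.zero_add]; exact mod_small (by omega)]
      simp only [fA]; split_ifs <;> (try simp only [iff_false, iff_true, false_or, or_false]) <;> first | contradiction | omega
    · have e2 : (iv + (n-1)) % n = iv - 1 := by
        rw [show iv + (n-1) = (iv - 1) + n by omega, Nat.add_mod_right]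
        exact mod_small (by omega)
      rcases Nat.lt_or_ge (iv + 1) n with hc | hc
      · rw [e2, mod_small hc]
        simp only [fA]; split_ifs <;> (try simp only [iff_false, iff_true, false_or, or_false]) <;> first | contradiction | omega
      · rw [e2, show (iv + 1) % n = 0 by rw [show iv + 1 = n by omega]; exact Nat.mod_self n]
        simp only [fA]; split_ifs <;> (try simp only [iff_false, iff_true, false_or, or_false]) <;> first | contradiction | omega
  rw [hset, Finset.card_singleton]

lemma cpk_permA_mid {n k : ℕ} (hn : 3 ≤ n) (h1 : 2 ≤ k) (h2 : k ≤ n - 2) :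
    cpk ⇑(permA n k) = 2 := by
  have h1' : 1 ≤ k := by omega
  have hkn : k < n := by omega
  unfold cpk
  have hset : (Finset.univ.filter fun i : Fin n =>
      ⇑(permA n k) ⟨(↑i + (n - 1)) % n, Nat.mod_lt _ i.pos⟩ < ⇑(permA n k) i ∧
      ⇑(permA n k) ⟨(↑i + 1) % n, Nat.mod_lt _ i.pos⟩ < ⇑(permA n k) i) =
      {(⟨1, by omega⟩ : Fin n), ⟨k + 1, by omega⟩} := by
    ext ⟨iv, hiv⟩
    simp only [Finset.mem_filter, Finset.mem_univ, true_and, Finset.mem_insert,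
      Finset.mem_singleton, Fin.mk.injEq]
    simp only [Fin.lt_def, permA_apply h1' hkn, Fin.val_mk]
    rcases Nat.eq_zero_or_pos iv with h0 | h0
    · subst h0
      rw [show (0 + (n-1)) % n = n - 1 by rw [Nat.zero_add]; exact mod_small (by omega),
        show (0 + 1) % n = 1 by rw [Nat.zero_add]; exact mod_small (by omega)]
      simp only [fA]; split_ifs <;> (try simp only [iff_false, iff_true, false_or, or_false]) <;> first | contradiction | omega
    · have e2 : (iv + (n-1)) % n = iv - 1 := by
        rw [show iv + (n-1) = (iv - 1) + n by omega, Nat.add_mod_right]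
        exact mod_small (by omega)
      rcases Nat.lt_or_ge (iv + 1) n with hc | hc
      · rw [e2, mod_small hc]
        simp only [fA]; split_ifs <;> (try simp only [iff_false, iff_true, false_or, or_false]) <;> first | contradiction | omega
      · rw [e2, show (iv + 1) % n = 0 by rw [show iv + 1 = n by omega]; exact Nat.mod_self n]
        simp only [fA]; split_ifs <;> (try simp only [iff_false, iff_true, false_or, or_false]) <;> first | contradiction | omega
  rw [hset]
  rw [Finset.card_insert_of_notMem (by simp [Fin.ext_iff]; omega), Finset.card_singleton]

lemma cpk_permA_top {n : ℕ} (hn : 3 ≤ n) : cpk ⇑(permA n (n-1)) = 1 := by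
  have h1 : 1 ≤ n - 1 := by omega
  have hkn : n - 1 < n := by omega
  unfold cpk
  have hset : (Finset.univ.filter fun i : Fin n =>
      ⇑(permA n (n-1)) ⟨(↑i + (n - 1)) % n, Nat.mod_lt _ i.pos⟩ < ⇑(permA n (n-1)) i ∧
      ⇑(permA n (n-1)) ⟨(↑i + 1) % n, Nat.mod_lt _ i.pos⟩ < ⇑(permA n (n-1)) i) =
      {(⟨1, by omega⟩ : Fin n)} := by
    ext ⟨iv, hiv⟩
    simp only [Finset.mem_filter, Finset.mem_univ, true_and, Finset.mem_singleton, Fin.mk.injEq]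
    simp only [Fin.lt_def, permA_apply h1 hkn, Fin.val_mk]
    rcases Nat.eq_zero_or_pos iv with h0 | h0
    · subst h0
      rw [show (0 + (n-1)) % n = n - 1 by rw [Nat.zero_add]; exact mod_small (by omega),
        show (0 + 1) % n = 1 by rw [Nat.zero_add]; exact mod_small (by omega)]
      simp only [fA]; split_ifs <;> (try simp only [iff_false, iff_true, false_or, or_false]) <;> first | contradiction | omega
    · have e2 : (iv + (n-1)) % n = iv - 1 := by
        rw [show iv + (n-1) = (iv - 1) + n by omega, Nat.add_mod_right]
        exact mod_small (by omega)
      rcases Nat.lt_or_ge (iv + 1) n with hc | hc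
      · rw [e2, mod_small hc]
        simp only [fA]; split_ifs <;> (try simp only [iff_false, iff_true, false_or, or_false]) <;> first | contradiction | omega
      · rw [e2, show (iv + 1) % n = 0 by rw [show iv + 1 = n by omega]; exact Nat.mod_self n]
        simp only [fA]; split_ifs <;> (try simp only [iff_false, iff_true, false_or, or_false]) <;> first | contradiction | omega
  rw [hset, Finset.card_singleton]

lemma cpk_permB {n j : ℕ} (hn : 3 ≤ n) (h1 : 2 ≤ j) (h2 : j ≤ n - 2) :
    cpk ⇑(permB n j) = 2 := by
  unfold cpk
  have hset : (Finset.univ.filter fun i : Fin n =>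
      ⇑(permB n j) ⟨(↑i + (n - 1)) % n, Nat.mod_lt _ i.pos⟩ < ⇑(permB n j) i ∧
      ⇑(permB n j) ⟨(↑i + 1) % n, Nat.mod_lt _ i.pos⟩ < ⇑(permB n j) i) =
      {(⟨1, by omega⟩ : Fin n), ⟨n - j + 1, by omega⟩} := by
    ext ⟨iv, hiv⟩
    simp only [Finset.mem_filter, Finset.mem_univ, true_and, Finset.mem_insert,
      Finset.mem_singleton, Fin.mk.injEq]
    simp only [Fin.lt_def, permB_apply h1 h2 hn, Fin.val_mk]
    rcases Nat.eq_zero_or_pos iv with h0 | h0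
    · subst h0
      rw [show (0 + (n-1)) % n = n - 1 by rw [Nat.zero_add]; exact mod_small (by omega),
        show (0 + 1) % n = 1 by rw [Nat.zero_add]; exact mod_small (by omega)]
      simp only [fB]; split_ifs <;> (try simp only [iff_false, iff_true, false_or, or_false]) <;> first | contradiction | omega
    · have e2 : (iv + (n-1)) % n = iv - 1 := by
        rw [show iv + (n-1) = (iv - 1) + n by omega, Nat.add_mod_right]
        exact mod_small (by omega)
      rcases Nat.lt_or_ge (iv + 1) n with hc | hc
      · rw [e2, mod_small hc]
        simp only [fB]; split_ifs <;> (try simp only [iff_false, iff_true, false_or, or_false]) <;> first | contradiction | omega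
      · rw [e2, show (iv + 1) % n = 0 by rw [show iv + 1 = n by omega]; exact Nat.mod_self n]
        simp only [fB]; split_ifs <;> (try simp only [iff_false, iff_true, false_or, or_false]) <;> first | contradiction | omega
  rw [hset]
  rw [Finset.card_insert_of_notMem (by simp [Fin.ext_iff]; omega), Finset.card_singleton]

/-! Final assembly -/


/-- The joint generating polynomial of `cdes` and `cpk` over cyclic permutations of
length `n ≥ 3` avoiding `[1234]` and `[1342]` equals
`q^(n-2) t + (2n-6) q^(n-2) t^2 + q^(n-1) t`, where `q = X 0` and `t = X 1`, and
each rotation class is represented by its unique rotation whose first entry is the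
smallest value. -/
theorem cdes_cpk_poly_av_1234_1342 (n : ℕ) (hn : 3 ≤ n) :
    (∑ᶠ σ ∈ {σ : Equiv.Perm (Fin n) | σ ⟨0, by omega⟩ = ⟨0, by omega⟩ ∧
        CycAvoids ⇑σ ![1,2,3,4] ∧ CycAvoids ⇑σ ![1,3,4,2]},
      (MvPolynomial.X 0 : MvPolynomial (Fin 2) ℤ) ^ cdes ⇑σ *
        MvPolynomial.X 1 ^ cpk ⇑σ) =
    MvPolynomial.X 0 ^ (n - 2) * MvPolynomial.X 1
      + MvPolynomial.C (2 * (n : ℤ) - 6) * MvPolynomial.X 0 ^ (n - 2) *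
          MvPolynomial.X 1 ^ 2
      + MvPolynomial.X 0 ^ (n - 1) * MvPolynomial.X 1 := by
  classical
  have hseteq : {σ : Equiv.Perm (Fin n) | σ ⟨0, by omega⟩ = ⟨0, by omega⟩ ∧
      CycAvoids ⇑σ ![1,2,3,4] ∧ CycAvoids ⇑σ ![1,3,4,2]} =
      ↑((Finset.Icc 1 (n-1)).image (permA n) ∪ (Finset.Icc 2 (n-2)).image (permB n)) := by
    ext σ
    rw [Set.mem_setOf_eq, Finset.mem_coe]
    exact mem_iff hn σ
  rw [hseteq, finsum_mem_coe_finset]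
  have hinjA : ∀ x ∈ Finset.Icc 1 (n-1), ∀ y ∈ Finset.Icc 1 (n-1),
      permA n x = permA n y → x = y := by
    intro x hx y hy hxy
    rw [Finset.mem_Icc] at hx hy
    have h1 := congrArg (fun e : Equiv.Perm (Fin n) => ((e ⟨1, by omega⟩ : Fin n) : ℕ)) hxy
    simp only [permA_apply hx.1 (by omega : x < n), permA_apply hy.1 (by omega : y < n),
      Fin.val_mk] at h1
    simp only [fA] at h1
    split_ifs at h1 <;> first | contradiction | omega
  have hinjB : ∀ x ∈ Finset.Icc 2 (n-2), ∀ y ∈ Finset.Icc 2 (n-2),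
      permB n x = permB n y → x = y := by
    intro x hx y hy hxy
    rw [Finset.mem_Icc] at hx hy
    have h1 := congrArg (fun e : Equiv.Perm (Fin n) => ((e ⟨n - x, by omega⟩ : Fin n) : ℕ)) hxy
    simp only [permB_apply hx.1 hx.2 hn, permB_apply hy.1 hy.2 hn, Fin.val_mk] at h1
    simp only [fB] at h1
    split_ifs at h1 <;> first | contradiction | omega
  have hdisj : Disjoint ((Finset.Icc 1 (n-1)).image (permA n))
      ((Finset.Icc 2 (n-2)).image (permB n)) := by
    rw [Finset.disjoint_left]
    intro σ hA hB
    obtain ⟨k, hk, hk2⟩ := Finset.mem_image.1 hA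
    obtain ⟨j, hj, hj2⟩ := Finset.mem_image.1 hB
    rw [Finset.mem_Icc] at hk hj
    have heq : permA n k = permB n j := by rw [hk2, hj2]
    have h1 := congrArg (fun e : Equiv.Perm (Fin n) => ((e ⟨1, by omega⟩ : Fin n) : ℕ)) heq
    have h2 := congrArg (fun e : Equiv.Perm (Fin n) => ((e ⟨n-1, by omega⟩ : Fin n) : ℕ)) heq
    simp only [permA_apply hk.1 (by omega : k < n), permB_apply hj.1 hj.2 hn,
      Fin.val_mk] at h1 h2
    simp only [fA, fB] at h1 h2
    split_ifs at h1 h2 <;> first | contradiction | omega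
  rw [Finset.sum_union hdisj, Finset.sum_image hinjA, Finset.sum_image hinjB]
  have hsplit : Finset.Icc 1 (n-1) = insert 1 (insert (n-1) (Finset.Icc 2 (n-2))) := by
    ext m
    simp only [Finset.mem_Icc, Finset.mem_insert]
    omega
  rw [hsplit, Finset.sum_insert (by simp only [Finset.mem_insert, Finset.mem_Icc]; omega),
    Finset.sum_insert (by simp only [Finset.mem_Icc]; omega)]
  rw [cdes_permA hn (le_refl 1) (by omega), cpk_permA_one hn, cdes_permA_top hn,
    cpk_permA_top hn]
  have hmidA : ∀ k ∈ Finset.Icc 2 (n-2),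
      (MvPolynomial.X 0 : MvPolynomial (Fin 2) ℤ) ^ cdes ⇑(permA n k) *
        MvPolynomial.X 1 ^ cpk ⇑(permA n k) =
      MvPolynomial.X 0 ^ (n-2) * MvPolynomial.X 1 ^ 2 := by
    intro k hk
    rw [Finset.mem_Icc] at hk
    rw [cdes_permA hn (by omega) hk.2, cpk_permA_mid hn hk.1 hk.2]
  have hmidB : ∀ j ∈ Finset.Icc 2 (n-2),
      (MvPolynomial.X 0 : MvPolynomial (Fin 2) ℤ) ^ cdes ⇑(permB n j) *
        MvPolynomial.X 1 ^ cpk ⇑(permB n j) =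
      MvPolynomial.X 0 ^ (n-2) * MvPolynomial.X 1 ^ 2 := by
    intro j hj
    rw [Finset.mem_Icc] at hj
    rw [cdes_permB hn hj.1 hj.2, cpk_permB hn hj.1 hj.2]
  rw [Finset.sum_congr rfl hmidA, Finset.sum_congr rfl hmidB, Finset.sum_const,
    Nat.card_Icc, show n - 2 + 1 - 2 = n - 3 by omega]
  have hC : (MvPolynomial.C (2 * (n : ℤ) - 6) : MvPolynomial (Fin 2) ℤ) =
      ((n - 3 : ℕ) : MvPolynomial (Fin 2) ℤ) + ((n - 3 : ℕ) : MvPolynomial (Fin 2) ℤ) := by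
    have hz : (2 * (n : ℤ) - 6) = ((n - 3 : ℕ) : ℤ) + ((n - 3 : ℕ) : ℤ) := by omega
    rw [hz, map_add, map_natCast (MvPolynomial.C : ℤ →+* MvPolynomial (Fin 2) ℤ) (n-3)]
  rw [hC]
  simp only [nsmul_eq_mul]
  ring
end
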